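/- arXiv:2305.02458 — 8 statements merged into one kernel-verified Lean document; each statement's English description precedes it below -/
import Mathlib

section
/- Let T : ℝ^n → ℝ^n be a Shapley operator and suppose the ergodic equation is solvable, i.e., there exist u ∈ ℝ^n and λ ∈ ℝ with T(u) = λe + u. Then for every v ∈ ℝ^n, the sequence k^{−1} T^k(v) converges to λe as k → ∞. -/
/-- If the ergodic equation `T(u) = λe + u` is solvable for a Shapley operator `T`,
then for every `v`, `k⁻¹ T^k(v)` converges to `λe` as `k → ∞`. -/
theorem escape_rate_of_ergodic {n : ℕ} (hn : 0 < n)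
    (T : (Fin n → ℝ) → (Fin n → ℝ))
    (hmono : Monotone T)
    (hhom : ∀ (x : Fin n → ℝ) (c : ℝ), T (fun i => x i + c) = fun i => T x i + c)
    (u : Fin n → ℝ) (lam : ℝ)
    (hu : T u = fun i => lam + u i) :
    ∀ v : Fin n → ℝ,
      Filter.Tendsto (fun k : ℕ => (k : ℝ)⁻¹ • T^[k] v) Filter.atTop
        (nhds (fun _ => lam)) := by
  intro v
  -- one-step nonexpansiveness
  have hstep : ∀ (x y : Fin n → ℝ) (c : ℝ), (∀ i, x i ≤ y i + c) →
      ∀ i, T x i ≤ T y i + c := by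
    intro x y c h i
    have := hmono (show x ≤ fun i => y i + c from h)
    calc T x i ≤ T (fun i => y i + c) i := this i
    _ = T y i + c := by rw [hhom]
  -- iterates of u
  have hiter : ∀ k : ℕ, T^[k] u = fun i => u i + k * lam := by
    intro k
    induction k with
    | zero => simp
    | succ k ih =>
      rw [Function.iterate_succ_apply', ih]
      have := hhom u ((k : ℝ) * lam)
      rw [this, hu]
      funext i
      push_cast
      ring
  -- bound constant
  set c : ℝ := ∑ i, |v i - u i| with hc
  have hcb : ∀ i, |v i - u i| ≤ c := fun i =>
    Finset.single_le_sum (f := fun j => |v j - u j|) (fun j _ => abs_nonneg _)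
      (Finset.mem_univ i)
  have hub : ∀ k i, T^[k] v i ≤ T^[k] u i + c := by
    intro k
    induction k with
    | zero =>
      intro i
      have := (abs_le.mp (hcb i)).2
      simp only [Function.iterate_zero, id]
      linarith
    | succ k ih =>
      intro i
      rw [Function.iterate_succ_apply', Function.iterate_succ_apply']
      exact hstep _ _ _ ih i
  have hlb : ∀ k i, T^[k] u i ≤ T^[k] v i + c := by
    intro k
    induction k with
    | zero =>
      intro i
      have := (abs_le.mp (hcb i)).1
      simp only [Function.iterate_zero, id]
      linarith
    | succ k ih =>
      intro i
      rw [Function.iterate_succ_apply', Function.iterate_succ_apply']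
      exact hstep _ _ _ ih i
  -- main bound: |T^[k] v i - k*lam| ≤ |u i| + c
  have hmain : ∀ k i, |T^[k] v i - k * lam| ≤ |u i| + c := by
    intro k i
    have h1 := hub k i
    have h2 := hlb k i
    rw [hiter k] at h1 h2
    simp only at h1 h2
    have := abs_nonneg (u i)
    rw [abs_le]
    constructor <;> [linarith [neg_abs_le (u i)]; linarith [le_abs_self (u i)]]
  rw [tendsto_pi_nhds]
  intro i
  have heq : (fun k : ℕ => ((k : ℝ)⁻¹ • T^[k] v) i) =
      fun k : ℕ => (k : ℝ)⁻¹ * T^[k] v i := rfl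
  rw [heq]
  have : Filter.Tendsto (fun k : ℕ => (k : ℝ)⁻¹ * T^[k] v i - lam)
      Filter.atTop (nhds 0) := by
    apply squeeze_zero_norm' (a := fun k : ℕ => (k : ℝ)⁻¹ * (|u i| + c))
    · filter_upwards [Filter.eventually_ge_atTop 1] with k hk
      have hk0 : (0 : ℝ) < (k : ℝ) := by exact_mod_cast hk
      have : (k : ℝ)⁻¹ * T^[k] v i - lam = (k : ℝ)⁻¹ * (T^[k] v i - k * lam) := by
        field_simp
      rw [Real.norm_eq_abs, this, abs_mul, abs_of_pos (inv_pos.mpr hk0)]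
      exact mul_le_mul_of_nonneg_left (hmain k i) (inv_nonneg.mpr hk0.le)
    · have : Filter.Tendsto (fun k : ℕ => (k : ℝ)⁻¹) Filter.atTop (nhds 0) :=
        tendsto_inv_atTop_zero.comp tendsto_natCast_atTop_atTop
      simpa using this.mul_const (|u i| + c)
  have := this.add_const lam
  simpa using this
end

section
/- Let T : ℝ^n → ℝ^n be a Shapley operator and suppose that for some integer q ≥ 1 and some real 0 < γ < 1, the iterate T^q is a γ-contraction in the Hilbert seminorm, i.e., ‖T^q(x) − T^q(y)‖_H ≤ γ‖x − y‖_H for all x, y ∈ ℝ^n. Then the ergodic equation is solvable: there exist u ∈ ℝ^n and λ ∈ ℝ such that T(u) = λe + u. -/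
/-- Hilbert's seminorm `‖x‖_H = max_i x_i - min_i x_i` on `ℝ^n`. -/
noncomputable def hilbertSeminorm {n : ℕ} (x : Fin n → ℝ) : ℝ :=
  (⨆ i, x i) - (⨅ i, x i)

lemma hs_shift {n : ℕ} (hn : 0 < n) (x : Fin n → ℝ) (c : ℝ) :
    hilbertSeminorm (fun i => x i + c) = hilbertSeminorm x := by
  have : Nonempty (Fin n) := ⟨⟨0, hn⟩⟩
  unfold hilbertSeminorm
  rw [← ciSup_add (Finite.bddAbove_range x) c, ← ciInf_add (Finite.bddBelow_range x) c]
  ring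

lemma sub_le_hs {n : ℕ} (hn : 0 < n) (z : Fin n → ℝ) (i j : Fin n) :
    z i - z j ≤ hilbertSeminorm z := by
  have : Nonempty (Fin n) := ⟨⟨0, hn⟩⟩
  have h1 : z i ≤ ⨆ k, z k := le_ciSup (Finite.bddAbove_range z) i
  have h2 : (⨅ k, z k) ≤ z j := ciInf_le (Finite.bddBelow_range z) j
  unfold hilbertSeminorm; linarith

lemma hs_nonneg {n : ℕ} (hn : 0 < n) (z : Fin n → ℝ) : 0 ≤ hilbertSeminorm z := by
  have := sub_le_hs hn z ⟨0, hn⟩ ⟨0, hn⟩; linarith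

lemma hs_le_two_dist {n : ℕ} (hn : 0 < n) (x y : Fin n → ℝ) :
    hilbertSeminorm (x - y) ≤ 2 * dist x y := by
  have : Nonempty (Fin n) := ⟨⟨0, hn⟩⟩
  have h1 : (⨆ i, (x - y) i) ≤ dist x y := by
    apply ciSup_le
    intro i
    have h := dist_le_pi_dist x y i
    rw [Real.dist_eq] at h
    simp only [Pi.sub_apply]
    have := le_abs_self (x i - y i)
    linarith
  have h2 : -(dist x y) ≤ ⨅ i, (x - y) i := by
    apply le_ciInf
    intro i
    have h := dist_le_pi_dist x y i
    rw [Real.dist_eq] at h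
    have := neg_abs_le (x i - y i)
    simp only [Pi.sub_apply]
    linarith
  unfold hilbertSeminorm; linarith

lemma dist_le_hs {n : ℕ} (hn : 0 < n) (x y : Fin n → ℝ)
    (hx : x ⟨0, hn⟩ = 0) (hy : y ⟨0, hn⟩ = 0) :
    dist x y ≤ hilbertSeminorm (x - y) := by
  rw [dist_pi_le_iff (hs_nonneg hn _)]
  intro i
  rw [Real.dist_eq, abs_le]
  have hz0 : (x - y) ⟨0, hn⟩ = 0 := by simp [hx, hy]
  constructor
  · have := sub_le_hs hn (x - y) ⟨0, hn⟩ i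
    simp only [hz0, Pi.sub_apply] at this ⊢
    linarith
  · have := sub_le_hs hn (x - y) i ⟨0, hn⟩
    simp only [hz0, Pi.sub_apply] at this ⊢
    linarith

/-- If some iterate `T^q` of a Shapley operator `T` is a `γ`-contraction in
Hilbert's seminorm, with `0 < γ < 1`, then the ergodic equation `T(u) = λe + u`
is solvable. -/
theorem ergodic_of_contraction {n : ℕ} (hn : 0 < n)
    (T : (Fin n → ℝ) → (Fin n → ℝ))
    (hmono : Monotone T)
    (hhom : ∀ (x : Fin n → ℝ) (c : ℝ), T (fun i => x i + c) = fun i => T x i + c)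
    (q : ℕ) (hq : 1 ≤ q) (γ : ℝ) (hγ0 : 0 < γ) (hγ1 : γ < 1)
    (hcontr : ∀ x y : Fin n → ℝ,
      hilbertSeminorm (T^[q] x - T^[q] y) ≤ γ * hilbertSeminorm (x - y)) :
    ∃ (u : Fin n → ℝ) (lam : ℝ), T u = fun i => lam + u i := by
  have hne : Nonempty (Fin n) := ⟨⟨0, hn⟩⟩
  set i0 : Fin n := ⟨0, hn⟩ with hi0
  -- iterated contraction
  have hpow : ∀ (k : ℕ) (x y : Fin n → ℝ),
      hilbertSeminorm (T^[q * k] x - T^[q * k] y) ≤ γ ^ k * hilbertSeminorm (x - y) := by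
    intro k
    induction k with
    | zero => intro x y; simp
    | succ k ih =>
      intro x y
      have h1 : q * (k + 1) = q + q * k := by ring
      rw [h1, Function.iterate_add_apply, Function.iterate_add_apply]
      calc hilbertSeminorm (T^[q] (T^[q*k] x) - T^[q] (T^[q*k] y))
          ≤ γ * hilbertSeminorm (T^[q*k] x - T^[q*k] y) := hcontr _ _
        _ ≤ γ * (γ ^ k * hilbertSeminorm (x - y)) := by
            apply mul_le_mul_of_nonneg_left (ih x y) hγ0.le
        _ = γ ^ (k + 1) * hilbertSeminorm (x - y) := by ring
  -- the normalized operator on the slice V = {x | x i0 = 0}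
  let V := {x : Fin n → ℝ // x i0 = 0}
  let F : V → V := fun x => ⟨fun i => T x.val i - T x.val i0, by simp⟩
  have hclosed : IsClosed {x : Fin n → ℝ | x i0 = 0} :=
    isClosed_eq (continuous_apply i0) continuous_const
  haveI : CompleteSpace V := hclosed.completeSpace_coe
  haveI : Nonempty V := ⟨⟨fun _ => 0, rfl⟩⟩
  -- iterates of F are T-iterates up to a constant
  have hFi : ∀ (j : ℕ) (x : V), ∃ c : ℝ, (F^[j] x).val = fun i => T^[j] x.val i + c := by
    intro j
    induction j with
    | zero => intro x; exact ⟨0, by simp⟩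
    | succ j ih =>
      intro x
      obtain ⟨c, hc⟩ := ih x
      refine ⟨-(T (T^[j] x.val) i0), ?_⟩
      rw [Function.iterate_succ_apply' F, Function.iterate_succ_apply' T]
      show (fun i => T (F^[j] x).val i - T (F^[j] x).val i0) = _
      rw [hc, hhom]
      funext i
      simp
      ring
  -- choose k such that 2 γ^k < 1
  obtain ⟨k, hk⟩ := exists_pow_lt_of_lt_one (show (0:ℝ) < 1/2 by norm_num) hγ1
  have hγk : 0 ≤ 2 * γ ^ k := by positivity
  set K : NNReal := ⟨2 * γ ^ k, hγk⟩ with hK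
  have hKlt : (K : ℝ) < 1 := by
    show 2 * γ ^ k < 1; linarith
  have hlip : ∀ u v : V, dist (F^[q*k] u) (F^[q*k] v) ≤ (K : ℝ) * dist u v := by
    intro u v
    obtain ⟨c₁, hc₁⟩ := hFi (q*k) u
    obtain ⟨c₂, hc₂⟩ := hFi (q*k) v
    have hd : dist (F^[q*k] u) (F^[q*k] v)
        ≤ hilbertSeminorm ((F^[q*k] u).val - (F^[q*k] v).val) := by
      rw [Subtype.dist_eq]
      exact dist_le_hs hn _ _ (F^[q*k] u).prop (F^[q*k] v).prop
    have heq : (F^[q*k] u).val - (F^[q*k] v).val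
        = fun i => (T^[q*k] u.val - T^[q*k] v.val) i + (c₁ - c₂) := by
      funext i
      simp [hc₁, hc₂]
      ring
    rw [heq, hs_shift hn] at hd
    calc dist (F^[q*k] u) (F^[q*k] v)
        ≤ hilbertSeminorm (T^[q*k] u.val - T^[q*k] v.val) := hd
      _ ≤ γ ^ k * hilbertSeminorm (u.val - v.val) := hpow k _ _
      _ ≤ γ ^ k * (2 * dist u.val v.val) := by
          apply mul_le_mul_of_nonneg_left (hs_le_two_dist hn _ _) (by positivity)
      _ = (K : ℝ) * dist u v := by
          rw [Subtype.dist_eq]; show _ = 2 * γ ^ k * _; ring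
  have hC : ContractingWith K (F^[q*k]) := by
    constructor
    · exact_mod_cast hKlt
    · exact LipschitzWith.of_dist_le_mul hlip
  set fp := hC.fixedPoint (F^[q*k]) with hfpdef
  have hfp : F^[q*k] fp = fp := hC.fixedPoint_isFixedPt
  have hFfp : Function.IsFixedPt (F^[q*k]) (F fp) := by
    show F^[q*k] (F fp) = F fp
    rw [← Function.iterate_succ_apply F (q*k) fp,
        Function.iterate_succ_apply' F (q*k) fp, hfp]
  have hFfix : F fp = fp := by
    have h1 := hC.fixedPoint_unique hFfp
    have h2 := hC.fixedPoint_unique (show Function.IsFixedPt (F^[q*k]) fp from hfp)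
    rw [h1, ← h2]
  refine ⟨fp.val, T fp.val i0, ?_⟩
  have hv : (F fp).val = fp.val := congrArg Subtype.val hFfix
  funext i
  have := congrFun hv i
  show T fp.val i = T fp.val i0 + fp.val i
  simp only [F] at this
  linarith [this]
end

section
/- Let M be an n×n row-stochastic matrix with n ≥ 2. Then the supremum, over all u ∈ ℝ^n with ‖u‖_H ≠ 0, of ‖Mu‖_H / ‖u‖_H equals the Dobrushin ergodicity coefficient δ(M) = 1 − min_{1≤i<j≤n} Σ_{k=1}^n min(M_{ik}, M_{jk}). -/
section Aux
variable {n : ℕ} [Nonempty (Fin n)]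

lemma dob_le_sup (f : Fin n → ℝ) (i : Fin n) : f i ≤ ⨆ j, f j :=
  le_ciSup (Set.finite_range f).bddAbove i

lemma dob_inf_le (f : Fin n → ℝ) (i : Fin n) : ⨅ j, f j ≤ f i :=
  ciInf_le (Set.finite_range f).bddBelow i

lemma dob_hsem_nonneg (f : Fin n → ℝ) : 0 ≤ hilbertSeminorm f := by
  have i : Fin n := Classical.arbitrary _
  have := (dob_inf_le f i).trans (dob_le_sup f i)
  simp only [hilbertSeminorm]; linarith

lemma dob_sup_eq (f : Fin n → ℝ) (c : ℝ) (i : Fin n) (hi : f i = c) (hle : ∀ k, f k ≤ c) :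
    (⨆ j, f j) = c :=
  le_antisymm (ciSup_le hle) (hi ▸ dob_le_sup f i)

lemma dob_inf_eq (f : Fin n → ℝ) (c : ℝ) (i : Fin n) (hi : f i = c) (hle : ∀ k, c ≤ f k) :
    (⨅ j, f j) = c :=
  le_antisymm (hi ▸ dob_inf_le f i) (le_ciInf hle)

/-- Core inequality. -/
lemma dob_core (M : Matrix (Fin n) (Fin n) ℝ) (hrow : ∀ i, ∑ j, M i j = 1)
    (u : Fin n → ℝ) (i j : Fin n) :
    M.mulVec u i - M.mulVec u j
      ≤ (1 - ∑ k, min (M i k) (M j k)) * hilbertSeminorm u := by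
  set T := ⨆ k, u k with hT
  set B := ⨅ k, u k with hB
  have h1 : M.mulVec u i - M.mulVec u j =
      (∑ k, (M i k - min (M i k) (M j k)) * u k)
        - ∑ k, (M j k - min (M i k) (M j k)) * u k := by
    simp only [Matrix.mulVec, dotProduct, sub_mul, Finset.sum_sub_distrib]
    ring
  have h2 : ∑ k, (M i k - min (M i k) (M j k)) * u k
      ≤ (1 - ∑ k, min (M i k) (M j k)) * T := by
    have hle : ∑ k, (M i k - min (M i k) (M j k)) * u k
        ≤ ∑ k, (M i k - min (M i k) (M j k)) * T :=
      Finset.sum_le_sum fun k _ =>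
        mul_le_mul_of_nonneg_left (dob_le_sup u k) (sub_nonneg.2 (min_le_left _ _))
    calc ∑ k, (M i k - min (M i k) (M j k)) * u k
        ≤ ∑ k, (M i k - min (M i k) (M j k)) * T := hle
      _ = (1 - ∑ k, min (M i k) (M j k)) * T := by
          rw [← Finset.sum_mul, Finset.sum_sub_distrib, hrow i]
  have h3 : (1 - ∑ k, min (M i k) (M j k)) * B
      ≤ ∑ k, (M j k - min (M i k) (M j k)) * u k := by
    have hle : ∑ k, (M j k - min (M i k) (M j k)) * B
        ≤ ∑ k, (M j k - min (M i k) (M j k)) * u k :=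
      Finset.sum_le_sum fun k _ =>
        mul_le_mul_of_nonneg_left (dob_inf_le u k) (sub_nonneg.2 (min_le_right _ _))
    calc (1 - ∑ k, min (M i k) (M j k)) * B
        = ∑ k, (M j k - min (M i k) (M j k)) * B := by
          rw [← Finset.sum_mul, Finset.sum_sub_distrib, hrow j]
      _ ≤ _ := hle
  rw [h1, show hilbertSeminorm u = T - B from rfl, mul_sub]
  linarith

end Aux

/-- Dobrushin's theorem: for a row-stochastic matrix `M` (with `n ≥ 2`), the
operator seminorm of `M` with respect to Hilbert's seminorm equals the
Dobrushin ergodicity coefficient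
`δ(M) = 1 - min_{i<j} Σ_k min(M_{ik}, M_{jk})`. -/
theorem dobrushin_coefficient {n : ℕ} (hn : 2 ≤ n)
    (M : Matrix (Fin n) (Fin n) ℝ)
    (hnn : ∀ i j, 0 ≤ M i j) (hrow : ∀ i, ∑ j, M i j = 1) :
    sSup {r : ℝ | ∃ u : Fin n → ℝ, hilbertSeminorm u ≠ 0 ∧
        r = hilbertSeminorm (M.mulVec u) / hilbertSeminorm u} =
      1 - sInf {s : ℝ | ∃ i j : Fin n, i < j ∧ s = ∑ k, min (M i k) (M j k)} := by
  haveI : Nonempty (Fin n) := ⟨⟨0, by omega⟩⟩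
  set S : Set ℝ := {s : ℝ | ∃ i j : Fin n, i < j ∧ s = ∑ k, min (M i k) (M j k)} with hS
  set R : Set ℝ := {r : ℝ | ∃ u : Fin n → ℝ, hilbertSeminorm u ≠ 0 ∧
      r = hilbertSeminorm (M.mulVec u) / hilbertSeminorm u} with hR
  -- finiteness and nonemptiness of S
  have hSfin : S.Finite := by
    apply Set.Finite.subset (Set.finite_range
      (fun p : Fin n × Fin n => ∑ k, min (M p.1 k) (M p.2 k)))
    rintro s ⟨i, j, hij, rfl⟩
    exact ⟨(i, j), rfl⟩
  have i0 : Fin n := ⟨0, by omega⟩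
  have i1 : Fin n := ⟨1, by omega⟩
  have hSne : S.Nonempty := ⟨∑ k, min (M ⟨0, by omega⟩ k) (M ⟨1, by omega⟩ k),
    ⟨⟨0, by omega⟩, ⟨1, by omega⟩, by simp [Fin.mk_lt_mk], rfl⟩⟩
  -- sInf S is a lower bound for every pair sum (any distinct pair)
  have hInf_le : ∀ i j : Fin n, i ≠ j → sInf S ≤ ∑ k, min (M i k) (M j k) := by
    intro i j hij
    rcases lt_or_gt_of_ne hij with h | h
    · exact csInf_le hSfin.bddBelow ⟨i, j, h, rfl⟩
    · have : (∑ k, min (M i k) (M j k)) = ∑ k, min (M j k) (M i k) := by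
        simp [min_comm]
      rw [this]
      exact csInf_le hSfin.bddBelow ⟨j, i, h, rfl⟩
  have hsum_le_one : ∀ i j : Fin n, (∑ k, min (M i k) (M j k)) ≤ 1 := by
    intro i j
    calc ∑ k, min (M i k) (M j k) ≤ ∑ k, M i k :=
          Finset.sum_le_sum fun k _ => min_le_left _ _
      _ = 1 := hrow i
  have hInf_le_one : sInf S ≤ 1 :=
    (hInf_le ⟨0, by omega⟩ ⟨1, by omega⟩ (by simp [Fin.ext_iff])).trans
      (hsum_le_one _ _)
  set δ : ℝ := 1 - sInf S with hδ
  have hδ0 : 0 ≤ δ := by simp [hδ]; linarith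
  -- upper bound: ‖Mu‖_H ≤ δ ‖u‖_H
  have hA : ∀ u : Fin n → ℝ,
      hilbertSeminorm (M.mulVec u) ≤ δ * hilbertSeminorm u := by
    intro u
    have hu0 : 0 ≤ hilbertSeminorm u := dob_hsem_nonneg u
    have key : ∀ i j : Fin n, M.mulVec u i - M.mulVec u j ≤ δ * hilbertSeminorm u := by
      intro i j
      rcases eq_or_ne i j with rfl | hij
      · simpa using mul_nonneg hδ0 hu0
      · calc M.mulVec u i - M.mulVec u j
            ≤ (1 - ∑ k, min (M i k) (M j k)) * hilbertSeminorm u :=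
              dob_core M hrow u i j
          _ ≤ δ * hilbertSeminorm u := by
              apply mul_le_mul_of_nonneg_right _ hu0
              have := hInf_le i j hij
              simp [hδ]; linarith
    show (⨆ i, M.mulVec u i) - (⨅ i, M.mulVec u i) ≤ δ * hilbertSeminorm u
    rw [sub_le_iff_le_add]
    apply ciSup_le
    intro i
    rw [← sub_le_iff_le_add']
    apply le_ciInf
    intro j
    have := key i j
    linarith
  -- greatest element δ ∈ R
  have hub : ∀ r ∈ R, r ≤ δ := by
    rintro r ⟨u, hu, rfl⟩
    have hupos : 0 < hilbertSeminorm u := lt_of_le_of_ne (dob_hsem_nonneg u) (Ne.symm hu)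
    rw [div_le_iff₀ hupos]
    exact hA u
  have hmem : δ ∈ R := by
    rcases eq_or_lt_of_le hInf_le_one with heq | hlt
    · -- δ = 0, take an indicator vector
      have hδ0' : δ = 0 := by simp [hδ, heq]
      set u : Fin n → ℝ := fun k => if k = ⟨0, by omega⟩ then 1 else 0 with hu
      have hsup : (⨆ k, u k) = 1 := by
        apply dob_sup_eq u 1 ⟨0, by omega⟩ (by simp [hu])
        intro k; by_cases h : k = (⟨0, by omega⟩ : Fin n) <;> simp [hu, h]
      have hinf : (⨅ k, u k) = 0 := by
        apply dob_inf_eq u 0 ⟨1, by omega⟩ (by simp [hu, Fin.ext_iff])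
        intro k; by_cases h : k = (⟨0, by omega⟩ : Fin n) <;> simp [hu, h]
      have hsem : hilbertSeminorm u = 1 := by
        simp [hilbertSeminorm, hsup, hinf]
      refine ⟨u, by simp [hsem], ?_⟩
      have h1 := hA u
      have h2 := dob_hsem_nonneg (M.mulVec u)
      rw [hsem, hδ0'] at h1 ⊢
      simp at h1
      rw [le_antisymm h1 h2]
      simp
    · -- δ > 0, take the extremal vector for the minimizing pair
      obtain ⟨i, j, hij, hmin⟩ := hSne.csInf_mem hSfin
      set u : Fin n → ℝ := fun k => if M j k ≤ M i k then 1 else 0 with hu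
      -- the key sum computation
      have hkey : M.mulVec u i - M.mulVec u j = δ := by
        have : M.mulVec u i - M.mulVec u j = ∑ k, (M i k - M j k) * u k := by
          simp only [Matrix.mulVec, dotProduct, sub_mul, Finset.sum_sub_distrib]
        rw [this]
        have : ∑ k, (M i k - M j k) * u k = ∑ k, (M i k - min (M i k) (M j k)) := by
          apply Finset.sum_congr rfl
          intro k _
          by_cases h : M j k ≤ M i k
          · simp [hu, h, min_eq_right h]
          · simp [hu, h, min_eq_left (le_of_not_ge h)]
        rw [this, Finset.sum_sub_distrib, hrow i, hδ, hmin]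
      -- existence of indices where the rows differ both ways
      have hne1 : ∃ k, M j k < M i k := by
        by_contra h
        push_neg at h
        have : ∑ k, min (M i k) (M j k) = 1 := by
          rw [← hrow i]
          exact Finset.sum_congr rfl fun k _ => min_eq_left (h k)
        rw [← hmin] at this; linarith
      have hne2 : ∃ k, M i k < M j k := by
        by_contra h
        push_neg at h
        have : ∑ k, min (M i k) (M j k) = 1 := by
          rw [← hrow j]
          exact Finset.sum_congr rfl fun k _ => min_eq_right (h k)
        rw [← hmin] at this; linarith
      obtain ⟨k1, hk1⟩ := hne1
      obtain ⟨k2, hk2⟩ := hne2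
      have hsup : (⨆ k, u k) = 1 := by
        apply dob_sup_eq u 1 k1 (by simp [hu, hk1.le])
        intro k; by_cases h : M j k ≤ M i k <;> simp [hu, h]
      have hinf : (⨅ k, u k) = 0 := by
        apply dob_inf_eq u 0 k2 (by simp [hu, not_le.2 hk2])
        intro k; by_cases h : M j k ≤ M i k <;> simp [hu, h]
      have hsem : hilbertSeminorm u = 1 := by simp [hilbertSeminorm, hsup, hinf]
      refine ⟨u, by simp [hsem], ?_⟩
      have hle : hilbertSeminorm (M.mulVec u) ≤ δ := by
        have := hA u; rw [hsem] at this; simpa using this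
      have hge : δ ≤ hilbertSeminorm (M.mulVec u) := by
        rw [← hkey]
        have h1 := dob_le_sup (M.mulVec u) i
        have h2 := dob_inf_le (M.mulVec u) j
        simp only [hilbertSeminorm]
        linarith
      rw [hsem, le_antisymm hle hge]
      simp
  exact IsGreatest.csSup_eq ⟨hmem, hub⟩
end

section
/- Let Q_1, …, Q_n be n×n row-stochastic matrices, each of which is unichain and has all diagonal entries strictly positive. Then for every pair of indices i₁, i₂ ∈ {1,…,n} there exists j ∈ {1,…,n} such that both (Q_1 Q_2 ⋯ Q_n)_{i₁ j} > 0 and (Q_1 Q_2 ⋯ Q_n)_{i₂ j} > 0; that is, any two rows of the product of any n such matrices have intersecting supports. -/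
/-- Reachability in the digraph associated to a nonnegative matrix `M`:
there is an arc from `i` to `j` whenever `M i j > 0`. -/
def Reaches {n : ℕ} (M : Matrix (Fin n) (Fin n) ℝ) : Fin n → Fin n → Prop :=
  Relation.ReflTransGen (fun i j => 0 < M i j)

/-- `C` is a final (strongly connected) class of the digraph of `M`:
it is nonempty, strongly connected, and closed under the arcs of `M`. -/
def IsFinalClass {n : ℕ} (M : Matrix (Fin n) (Fin n) ℝ) (C : Set (Fin n)) : Prop :=
  C.Nonempty ∧ (∀ i ∈ C, ∀ j ∈ C, Reaches M i j) ∧ (∀ i ∈ C, ∀ j, 0 < M i j → j ∈ C)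

/-- A nonnegative matrix is unichain if its digraph has a unique final
strongly connected component. -/
def Unichain {n : ℕ} (M : Matrix (Fin n) (Fin n) ℝ) : Prop :=
  ∃! C : Set (Fin n), IsFinalClass M C

lemma entry_nonneg_mul {n : ℕ} {A B : Matrix (Fin n) (Fin n) ℝ}
    (hA : ∀ i j, 0 ≤ A i j) (hB : ∀ i j, 0 ≤ B i j) : ∀ i j, 0 ≤ (A * B) i j := by
  intro i j
  rw [Matrix.mul_apply]
  exact Finset.sum_nonneg fun k _ => mul_nonneg (hA i k) (hB k j)

lemma entry_pos_mul {n : ℕ} {A B : Matrix (Fin n) (Fin n) ℝ}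
    (hA : ∀ i j, 0 ≤ A i j) (hB : ∀ i j, 0 ≤ B i j) {i k j : Fin n}
    (h1 : 0 < A i k) (h2 : 0 < B k j) : 0 < (A * B) i j := by
  rw [Matrix.mul_apply]
  exact Finset.sum_pos' (fun l _ => mul_nonneg (hA i l) (hB l j))
    ⟨k, Finset.mem_univ k, mul_pos h1 h2⟩

lemma mem_of_reaches {n : ℕ} {M : Matrix (Fin n) (Fin n) ℝ} {S : Set (Fin n)}
    (hcl : ∀ i ∈ S, ∀ j, 0 < M i j → j ∈ S) {a b : Fin n}
    (h : Reaches M a b) (ha : a ∈ S) : b ∈ S := by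
  induction h with
  | refl => exact ha
  | tail _ hbc ih => exact hcl _ ih _ hbc

/-- Any nonempty set closed under the arcs of `M` contains a final class. -/
lemma closed_contains_finalClass {n : ℕ} (M : Matrix (Fin n) (Fin n) ℝ)
    {S : Set (Fin n)} (hne : S.Nonempty) (hcl : ∀ i ∈ S, ∀ j, 0 < M i j → j ∈ S) :
    ∃ C : Set (Fin n), IsFinalClass M C ∧ C ⊆ S := by
  classical
  obtain ⟨i, hi⟩ := hne
  set R : Fin n → Finset (Fin n) := fun a => Finset.univ.filter (fun k => Reaches M a k) with hR
  obtain ⟨j, hj, hjmin⟩ := Finset.exists_min_image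
    (Finset.univ.filter (fun k => Reaches M i k)) (fun a => (R a).card)
    ⟨i, Finset.mem_filter.mpr ⟨Finset.mem_univ i, Relation.ReflTransGen.refl⟩⟩
  have hij : Reaches M i j := (Finset.mem_filter.mp hj).2
  have hRsub : ∀ a b, Reaches M a b → R b ⊆ R a := by
    intro a b hab k hk
    rw [hR] at hk ⊢
    simp only [Finset.mem_filter, Finset.mem_univ, true_and] at hk ⊢
    exact hab.trans hk
  refine ⟨{k | Reaches M j k}, ⟨⟨j, Relation.ReflTransGen.refl⟩, ?_, ?_⟩, ?_⟩
  · -- strong connectivity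
    intro a ha b hb
    have hja : Reaches M j a := ha
    have hRba : R a ⊆ R j := hRsub _ _ hja
    have hia : Reaches M i a := hij.trans hja
    have hcard : (R j).card ≤ (R a).card :=
      hjmin a (Finset.mem_filter.mpr ⟨Finset.mem_univ _, hia⟩)
    have heq : R a = R j := Finset.eq_of_subset_of_card_le hRba hcard
    have hb' : b ∈ R j := by
      rw [hR]; simp only [Finset.mem_filter, Finset.mem_univ, true_and]; exact hb
    rw [← heq, hR] at hb'
    simpa using hb'
  · intro a ha b hab
    exact (ha : Reaches M j a).tail hab
  · intro k hk
    exact mem_of_reaches hcl (hk : Reaches M j k) (mem_of_reaches hcl hij hi)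

lemma list_prod_entry_nonneg {n : ℕ} (L : List (Matrix (Fin n) (Fin n) ℝ))
    (h : ∀ A ∈ L, ∀ i j, 0 ≤ A i j) : ∀ i j, 0 ≤ L.prod i j := by
  induction L with
  | nil =>
    intro i j
    rw [List.prod_nil]
    by_cases hij : i = j <;> simp [Matrix.one_apply, hij]
  | cons A L ih =>
    rw [List.prod_cons]
    exact entry_nonneg_mul (h A List.mem_cons_self)
      (ih fun B hB => h B (List.mem_cons_of_mem A hB))

/-- For `n` row-stochastic unichain matrices with positive diagonals, any two
rows of their product have intersecting supports. -/
theorem unichain_product_rows_intersect {n : ℕ} (hn : 0 < n)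
    (Q : Fin n → Matrix (Fin n) (Fin n) ℝ)
    (hnn : ∀ m i j, 0 ≤ Q m i j) (hrow : ∀ m i, ∑ j, Q m i j = 1)
    (huni : ∀ m, Unichain (Q m)) (hdiag : ∀ m i, 0 < Q m i i) :
    ∀ i₁ i₂ : Fin n, ∃ j : Fin n,
      0 < (List.ofFn Q).prod i₁ j ∧ 0 < (List.ofFn Q).prod i₂ j := by
  classical
  intro i₁ i₂
  set L : List (Matrix (Fin n) (Fin n) ℝ) := List.ofFn Q with hL
  have hlen : L.length = n := by simp [hL]
  set P : ℕ → Matrix (Fin n) (Fin n) ℝ := fun k => (L.take k).prod with hP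
  have hPnn : ∀ k i j, 0 ≤ P k i j := by
    intro k
    apply list_prod_entry_nonneg
    intro A hA
    have : A ∈ L := List.mem_of_mem_take hA
    rw [hL, List.mem_ofFn] at this
    obtain ⟨m, rfl⟩ := this
    exact hnn m
  have hstep : ∀ k (hk : k < n), P (k + 1) = P k * Q ⟨k, hk⟩ := by
    intro k hk
    have hk' : k < L.length := by rw [hlen]; exact hk
    rw [hP]
    simp only
    rw [List.prod_take_succ L k hk']
    congr 1
    simp [hL]
  -- supports
  set supp : ℕ → Fin n → Finset (Fin n) :=
    fun k i => Finset.univ.filter (fun j => 0 < P k i j) with hsupp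
  have hdiagP : ∀ k, k ≤ n → ∀ i, 0 < P k i i := by
    intro k
    induction k with
    | zero => intro _ i; simp [hP, Matrix.one_apply]
    | succ k ih =>
      intro hk i
      have hk' : k < n := hk
      rw [hstep k hk']
      exact entry_pos_mul (hPnn k) (hnn _) (ih (Nat.le_of_lt hk') i) (hdiag _ i)
  have hmono : ∀ k (hk : k < n) i j, 0 < P k i j → 0 < P (k + 1) i j := by
    intro k hk i j h
    rw [hstep k hk]
    exact entry_pos_mul (hPnn k) (hnn _) h (hdiag _ j)
  have hsuppmono : ∀ k (hk : k < n) i, supp k i ⊆ supp (k + 1) i := by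
    intro k hk i j hj
    simp only [hsupp, Finset.mem_filter, Finset.mem_univ, true_and] at hj ⊢
    exact hmono k hk i j hj
  -- main induction
  have key : ∀ k, k ≤ n →
      (∃ j, 0 < P k i₁ j ∧ 0 < P k i₂ j) ∨
      k + 2 ≤ (supp k i₁).card + (supp k i₂).card := by
    intro k
    induction k with
    | zero =>
      intro _
      by_cases h : i₁ = i₂
      · exact Or.inl ⟨i₁, hdiagP 0 (Nat.zero_le n) i₁, by rw [h]; exact hdiagP 0 (Nat.zero_le n) i₂⟩
      · right
        have h1 : i₁ ∈ supp 0 i₁ := by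
          simp only [hsupp, Finset.mem_filter, Finset.mem_univ, true_and]
          exact hdiagP 0 (Nat.zero_le n) i₁
        have h2 : i₂ ∈ supp 0 i₂ := by
          simp only [hsupp, Finset.mem_filter, Finset.mem_univ, true_and]
          exact hdiagP 0 (Nat.zero_le n) i₂
        have c1 : 1 ≤ (supp 0 i₁).card := Finset.card_pos.mpr ⟨i₁, h1⟩
        have c2 : 1 ≤ (supp 0 i₂).card := Finset.card_pos.mpr ⟨i₂, h2⟩
        omega
    | succ k ih =>
      intro hk
      have hk' : k < n := hk
      rcases ih (Nat.le_of_lt hk') with h | h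
      · obtain ⟨j, hj1, hj2⟩ := h
        exact Or.inl ⟨j, hmono k hk' i₁ j hj1, hmono k hk' i₂ j hj2⟩
      · by_cases hint : ∃ j, 0 < P (k + 1) i₁ j ∧ 0 < P (k + 1) i₂ j
        · exact Or.inl hint
        · right
          by_contra hcard
          push_neg at hcard
          -- supports don't grow, hence equal and closed under arcs of Q ⟨k, hk'⟩
          have m1 := Finset.card_le_card (hsuppmono k hk' i₁)
          have m2 := Finset.card_le_card (hsuppmono k hk' i₂)
          have e1 : supp (k + 1) i₁ = supp k i₁ :=
            (Finset.eq_of_subset_of_card_le (hsuppmono k hk' i₁) (by omega)).symm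
          have e2 : supp (k + 1) i₂ = supp k i₂ :=
            (Finset.eq_of_subset_of_card_le (hsuppmono k hk' i₂) (by omega)).symm
          have closed : ∀ i, supp (k + 1) i = supp k i →
              ∀ a ∈ (↑(supp k i) : Set (Fin n)), ∀ b, 0 < Q ⟨k, hk'⟩ a b →
                b ∈ (↑(supp k i) : Set (Fin n)) := by
            intro i he a ha b hab
            simp only [Finset.coe_filter, Set.mem_setOf_eq, hsupp, Finset.mem_univ,
              true_and] at ha ⊢
            have : 0 < P (k + 1) i b := by
              rw [hstep k hk']
              exact entry_pos_mul (hPnn k) (hnn _) ha hab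
            have hb : b ∈ supp (k + 1) i := by
              simp only [hsupp, Finset.mem_filter, Finset.mem_univ, true_and]
              exact this
            rw [he] at hb
            simpa only [hsupp, Finset.mem_filter, Finset.mem_univ, true_and] using hb
          obtain ⟨C₁, hC₁, hC₁sub⟩ := closed_contains_finalClass (Q ⟨k, hk'⟩)
            (S := (↑(supp k i₁) : Set (Fin n)))
            ⟨i₁, by simp only [Finset.coe_filter, Set.mem_setOf_eq, hsupp, Finset.mem_univ,
              true_and]; exact hdiagP k (Nat.le_of_lt hk') i₁⟩
            (closed i₁ e1)
          obtain ⟨C₂, hC₂, hC₂sub⟩ := closed_contains_finalClass (Q ⟨k, hk'⟩)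
            (S := (↑(supp k i₂) : Set (Fin n)))
            ⟨i₂, by simp only [Finset.coe_filter, Set.mem_setOf_eq, hsupp, Finset.mem_univ,
              true_and]; exact hdiagP k (Nat.le_of_lt hk') i₂⟩
            (closed i₂ e2)
          obtain ⟨C, hC, hCuniq⟩ := huni ⟨k, hk'⟩
          have : C₁ = C₂ := by rw [hCuniq C₁ hC₁, hCuniq C₂ hC₂]
          obtain ⟨c, hc⟩ := hC₁.1
          have hc₁ : c ∈ supp k i₁ := hC₁sub hc
          have hc₂ : c ∈ supp k i₂ := hC₂sub (this ▸ hc)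
          simp only [hsupp, Finset.mem_filter, Finset.mem_univ, true_and] at hc₁ hc₂
          exact hint ⟨c, hmono k hk' i₁ c hc₁, hmono k hk' i₂ c hc₂⟩
  -- conclude
  have hfull : P n = L.prod := by
    rw [hP]
    simp only
    rw [List.take_of_length_le (le_of_eq hlen)]
  rcases key n le_rfl with h | h
  · obtain ⟨j, hj1, hj2⟩ := h
    rw [hfull] at hj1 hj2
    exact ⟨j, hj1, hj2⟩
  · by_cases hint : ∃ j, 0 < P n i₁ j ∧ 0 < P n i₂ j
    · obtain ⟨j, hj1, hj2⟩ := hint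
      rw [hfull] at hj1 hj2
      exact ⟨j, hj1, hj2⟩
    · exfalso
      have hdisj : Disjoint (supp n i₁) (supp n i₂) := by
        rw [Finset.disjoint_left]
        intro j hj1 hj2
        simp only [hsupp, Finset.mem_filter, Finset.mem_univ, true_and] at hj1 hj2
        exact hint ⟨j, hj1, hj2⟩
      have := Finset.card_union_of_disjoint hdisj
      have hle : (supp n i₁ ∪ supp n i₂).card ≤ n := by
        have := Finset.card_le_card (Finset.subset_univ (supp n i₁ ∪ supp n i₂))
        simpa using this
      omega
end

section
/- Let 0 < θ ≤ 1, let k ≥ 1, and let Q_1, …, Q_k be n×n row-stochastic matrices such that every nonzero entry of each Q_m is at least θ, and such that for every pair of indices i₁, i₂ ∈ {1,…,n} there exists j with (Q_1⋯Q_k)_{i₁ j} > 0 and (Q_1⋯Q_k)_{i₂ j} > 0. Then for every h ∈ ℝ^n, ‖(Q_1⋯Q_k) h‖_H ≤ (1 − θ^k) ‖h‖_H. -/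
private lemma prod_entry_nonneg {n : ℕ} (L : List (Matrix (Fin n) (Fin n) ℝ))
    (h1 : ∀ A ∈ L, ∀ i j, 0 ≤ A i j) :
    ∀ i j, 0 ≤ L.prod i j := by
  induction L with
  | nil =>
    intro i j
    by_cases h : i = j <;> simp [Matrix.one_apply, h]
  | cons A L ih =>
    intro i j
    rw [List.prod_cons, Matrix.mul_apply]
    exact Finset.sum_nonneg fun l _ => mul_nonneg
      (h1 A (List.mem_cons_self) i l)
      (ih (fun B hB => h1 B (List.mem_cons_of_mem _ hB)) l j)

private lemma prod_row_sum {n : ℕ} (L : List (Matrix (Fin n) (Fin n) ℝ))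
    (h2 : ∀ A ∈ L, ∀ i, ∑ j, A i j = 1) :
    ∀ i, ∑ j, L.prod i j = 1 := by
  induction L with
  | nil => intro i; simp [Matrix.one_apply]
  | cons A L ih =>
    intro i
    have ihs := ih (fun B hB => h2 B (List.mem_cons_of_mem _ hB))
    rw [List.prod_cons]
    simp only [Matrix.mul_apply]
    rw [Finset.sum_comm]
    calc ∑ l, ∑ j, A i l * L.prod l j = ∑ l, A i l * ∑ j, L.prod l j := by
          simp [Finset.mul_sum]
      _ = ∑ l, A i l := by simp [ihs]
      _ = 1 := h2 A (List.mem_cons_self) i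

private lemma prod_minor {n : ℕ} (θ : ℝ) (hθ0 : 0 < θ)
    (L : List (Matrix (Fin n) (Fin n) ℝ))
    (h1 : ∀ A ∈ L, ∀ i j, 0 ≤ A i j)
    (h3 : ∀ A ∈ L, ∀ i j, A i j ≠ 0 → θ ≤ A i j) :
    ∀ i j, L.prod i j ≠ 0 → θ ^ L.length ≤ L.prod i j := by
  induction L with
  | nil =>
    intro i j hne
    simp only [List.prod_nil, List.length_nil, pow_zero]
    by_cases h : i = j
    · simp [Matrix.one_apply, h]
    · exfalso; apply hne; simp [Matrix.one_apply, h]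
  | cons A L ih =>
    intro i j hne
    have h1' := fun B hB => h1 B (List.mem_cons_of_mem A hB)
    have h3' := fun B hB => h3 B (List.mem_cons_of_mem A hB)
    have ihn := prod_entry_nonneg L h1'
    have hA1 : ∀ i j, 0 ≤ A i j := h1 A (List.mem_cons_self)
    rw [List.prod_cons, Matrix.mul_apply] at hne ⊢
    obtain ⟨l, _, hl⟩ := Finset.exists_ne_zero_of_sum_ne_zero hne
    have hAl : A i l ≠ 0 := fun h => hl (by simp [h])
    have hPl : L.prod l j ≠ 0 := fun h => hl (by simp [h])
    have hterm : θ ^ (A :: L).length ≤ A i l * L.prod l j := by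
      rw [List.length_cons, pow_succ, mul_comm (θ ^ L.length) θ]
      exact mul_le_mul (h3 A (List.mem_cons_self) i l hAl)
        (ih h1' h3' l j hPl) (pow_nonneg hθ0.le _) (hA1 i l)
    refine hterm.trans (Finset.single_le_sum (f := fun l => A i l * L.prod l j)
      (fun l _ => mul_nonneg (hA1 i l) (ihn l j)) (Finset.mem_univ l))

private lemma pair_le {n : ℕ} (p q h : Fin n → ℝ) (δ t b : ℝ)
    (hp0 : ∀ j, 0 ≤ p j) (hq0 : ∀ j, 0 ≤ q j)
    (hp1 : ∑ j, p j = 1) (hq1 : ∑ j, q j = 1)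
    (j0 : Fin n) (hpj : δ ≤ p j0) (hqj : δ ≤ q j0)
    (hhb : ∀ j, b ≤ h j) (hht : ∀ j, h j ≤ t) :
    ∑ j, p j * h j - ∑ j, q j * h j ≤ (1 - δ) * (t - b) := by
  set r : Fin n → ℝ := fun j => min (p j) (q j) with hr
  have hr0 : ∀ j, 0 ≤ r j := fun j => le_min (hp0 j) (hq0 j)
  set S := ∑ j, r j with hS
  have hδS : δ ≤ S :=
    le_trans (le_min hpj hqj)
      (Finset.single_le_sum (f := r) (fun j _ => hr0 j) (Finset.mem_univ j0))
  have htb : 0 ≤ t - b := sub_nonneg.2 ((hhb j0).trans (hht j0))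
  have hup : ∑ j, (p j - r j) * h j ≤ (1 - S) * t := by
    calc ∑ j, (p j - r j) * h j ≤ ∑ j, (p j - r j) * t :=
          Finset.sum_le_sum fun j _ =>
            mul_le_mul_of_nonneg_left (hht j) (sub_nonneg.2 (min_le_left _ _))
      _ = (1 - S) * t := by
          rw [← Finset.sum_mul, Finset.sum_sub_distrib, hp1]
  have hlo : (1 - S) * b ≤ ∑ j, (q j - r j) * h j := by
    calc (1 - S) * b = ∑ j, (q j - r j) * b := by
          rw [← Finset.sum_mul, Finset.sum_sub_distrib, hq1]
      _ ≤ ∑ j, (q j - r j) * h j :=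
          Finset.sum_le_sum fun j _ =>
            mul_le_mul_of_nonneg_left (hhb j) (sub_nonneg.2 (min_le_right _ _))
  have key : ∑ j, p j * h j - ∑ j, q j * h j
      = ∑ j, (p j - r j) * h j - ∑ j, (q j - r j) * h j := by
    simp only [sub_mul, Finset.sum_sub_distrib]
    ring
  calc ∑ j, p j * h j - ∑ j, q j * h j
      ≤ (1 - S) * t - (1 - S) * b := by rw [key]; exact sub_le_sub hup hlo
    _ = (1 - S) * (t - b) := by ring
    _ ≤ (1 - δ) * (t - b) := mul_le_mul_of_nonneg_right (by linarith) htb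

/-- If `Q_1, …, Q_k` are row-stochastic matrices whose nonzero entries are at
least `θ`, and any two rows of the product `Q_1⋯Q_k` have intersecting
supports, then the product contracts Hilbert's seminorm with rate `1 - θ^k`. -/
theorem product_contraction_of_rows_intersect {n k : ℕ} (hn : 0 < n) (hk : 1 ≤ k)
    (θ : ℝ) (hθ0 : 0 < θ) (hθ1 : θ ≤ 1)
    (Q : Fin k → Matrix (Fin n) (Fin n) ℝ)
    (hnn : ∀ m i j, 0 ≤ Q m i j) (hrow : ∀ m i, ∑ j, Q m i j = 1)
    (hmin : ∀ m i j, Q m i j ≠ 0 → θ ≤ Q m i j)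
    (hinter : ∀ i₁ i₂ : Fin n, ∃ j : Fin n,
      0 < (List.ofFn Q).prod i₁ j ∧ 0 < (List.ofFn Q).prod i₂ j) :
    ∀ h : Fin n → ℝ,
      hilbertSeminorm ((List.ofFn Q).prod.mulVec h) ≤ (1 - θ ^ k) * hilbertSeminorm h := by
  intro h
  haveI : Nonempty (Fin n) := ⟨⟨0, hn⟩⟩
  set P := (List.ofFn Q).prod with hP
  have hmem : ∀ A ∈ List.ofFn Q, ∃ m, Q m = A := by
    intro A hA
    rw [List.mem_ofFn] at hA
    exact hA
  have h1 : ∀ A ∈ List.ofFn Q, ∀ i j, 0 ≤ A i j := by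
    intro A hA i j; obtain ⟨m, rfl⟩ := hmem A hA; exact hnn m i j
  have h2 : ∀ A ∈ List.ofFn Q, ∀ i, ∑ j, A i j = 1 := by
    intro A hA i; obtain ⟨m, rfl⟩ := hmem A hA; exact hrow m i
  have h3 : ∀ A ∈ List.ofFn Q, ∀ i j, A i j ≠ 0 → θ ≤ A i j := by
    intro A hA i j; obtain ⟨m, rfl⟩ := hmem A hA; exact hmin m i j
  have hPn := prod_entry_nonneg _ h1
  have hPs := prod_row_sum _ h2
  have hPm : ∀ i j, P i j ≠ 0 → θ ^ k ≤ P i j := by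
    have := prod_minor θ hθ0 _ h1 h3
    rwa [List.length_ofFn] at this
  -- sup and inf of h
  set t := ⨆ i, h i with ht
  set b := ⨅ i, h i with hb
  have hbdd : BddAbove (Set.range h) := (Set.finite_range h).bddAbove
  have hbdd' : BddBelow (Set.range h) := (Set.finite_range h).bddBelow
  have hht : ∀ j, h j ≤ t := fun j => le_ciSup hbdd j
  have hhb : ∀ j, b ≤ h j := fun j => ciInf_le hbdd' j
  -- the image vector
  set g := P.mulVec h with hg
  have hgval : ∀ i, g i = ∑ j, P i j * h j := by
    intro i; simp [hg, Matrix.mulVec, dotProduct]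
  obtain ⟨i₁, hi₁⟩ := Finite.exists_max g
  obtain ⟨i₂, hi₂⟩ := Finite.exists_min g
  have hsup : (⨆ i, g i) = g i₁ :=
    le_antisymm (ciSup_le hi₁) (le_ciSup (Set.finite_range g).bddAbove i₁)
  have hinf : (⨅ i, g i) = g i₂ :=
    le_antisymm (ciInf_le (Set.finite_range g).bddBelow i₂) (le_ciInf hi₂)
  obtain ⟨j0, hj1, hj2⟩ := hinter i₁ i₂
  have hpj : θ ^ k ≤ P i₁ j0 := hPm i₁ j0 hj1.ne'
  have hqj : θ ^ k ≤ P i₂ j0 := hPm i₂ j0 hj2.ne'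
  have main : g i₁ - g i₂ ≤ (1 - θ ^ k) * (t - b) := by
    rw [hgval i₁, hgval i₂]
    exact pair_le (P i₁) (P i₂) h (θ ^ k) t b (hPn i₁) (hPn i₂)
      (hPs i₁) (hPs i₂) j0 hpj hqj hhb hht
  calc hilbertSeminorm g = g i₁ - g i₂ := by rw [hilbertSeminorm, hsup, hinf]
    _ ≤ (1 - θ ^ k) * (t - b) := main
    _ = (1 - θ ^ k) * hilbertSeminorm h := rfl
end

section
/- Let 0 < θ ≤ 1, let k ≥ 1, and let Q_1, …, Q_k be n×n row-stochastic matrices such that every nonzero entry of each Q_m is at least θ, and such that every entry of the product Q_1⋯Q_k is strictly positive. Then for every h ∈ ℝ^n, ‖(Q_1⋯Q_k) h‖_H ≤ (1 − n·θ^k) ‖h‖_H. -/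
lemma myprod_nonneg {n : ℕ} (L : List (Matrix (Fin n) (Fin n) ℝ))
    (hnn : ∀ A ∈ L, ∀ i j, 0 ≤ A i j) : ∀ i j, 0 ≤ L.prod i j := by
  induction L with
  | nil =>
    intro i j
    simp [Matrix.one_apply]
    split <;> norm_num
  | cons A T ih =>
    intro i j
    rw [List.prod_cons, Matrix.mul_apply]
    exact Finset.sum_nonneg fun l _ => mul_nonneg
      (hnn A List.mem_cons_self i l)
      (ih (fun B hB => hnn B (List.mem_cons_of_mem _ hB)) l j)

lemma myprod_rowsum {n : ℕ} (L : List (Matrix (Fin n) (Fin n) ℝ))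
    (hrow : ∀ A ∈ L, ∀ i, ∑ j, A i j = 1) : ∀ i, ∑ j, L.prod i j = 1 := by
  induction L with
  | nil => intro i; simp [Matrix.one_apply]
  | cons A T ih =>
    intro i
    have ih2 := ih (fun B hB => hrow B (List.mem_cons_of_mem _ hB))
    rw [List.prod_cons]
    simp only [Matrix.mul_apply]
    rw [Finset.sum_comm]
    calc ∑ l, ∑ j, A i l * T.prod l j = ∑ l, A i l * ∑ j, T.prod l j := by
          simp [Finset.mul_sum]
      _ = 1 := by simp [ih2, hrow A List.mem_cons_self i]

lemma prod_entry_ge {n : ℕ} (θ : ℝ) (hθ0 : 0 < θ) (L : List (Matrix (Fin n) (Fin n) ℝ))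
    (hnn : ∀ A ∈ L, ∀ i j, 0 ≤ A i j)
    (hmin : ∀ A ∈ L, ∀ i j, A i j ≠ 0 → θ ≤ A i j) :
    ∀ i j, 0 < L.prod i j → θ ^ L.length ≤ L.prod i j := by
  induction L with
  | nil =>
    intro i j hpos
    simp only [List.prod_nil, pow_zero, List.length_nil]
    by_cases hij : i = j
    · simp [Matrix.one_apply, hij]
    · simp [Matrix.one_apply, hij] at hpos
  | cons A T ih =>
    intro i j hpos
    have hT1 := myprod_nonneg T (fun B hB => hnn B (List.mem_cons_of_mem _ hB))
    have hA1 : ∀ i j, 0 ≤ A i j := hnn A List.mem_cons_self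
    rw [List.prod_cons, Matrix.mul_apply] at hpos ⊢
    have hex : ∃ l : Fin n, 0 < A i l * T.prod l j := by
      by_contra hc
      push_neg at hc
      have : ∑ l, A i l * T.prod l j = 0 := le_antisymm
        (Finset.sum_nonpos fun l _ => hc l)
        (Finset.sum_nonneg fun l _ => mul_nonneg (hA1 i l) (hT1 l j))
      rw [this] at hpos; exact lt_irrefl 0 hpos
    obtain ⟨l, hl⟩ := hex
    have hAl : 0 < A i l := by
      rcases (hA1 i l).lt_or_eq with h | h
      · exact h
      · rw [← h, zero_mul] at hl; exact absurd hl (lt_irrefl 0)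
    have hTl : 0 < T.prod l j := by
      rcases (hT1 l j).lt_or_eq with h | h
      · exact h
      · rw [← h, mul_zero] at hl; exact absurd hl (lt_irrefl 0)
    have h1 : θ ≤ A i l := hmin A List.mem_cons_self i l hAl.ne'
    have h2 : θ ^ T.length ≤ T.prod l j :=
      ih (fun B hB => hnn B (List.mem_cons_of_mem _ hB))
        (fun B hB => hmin B (List.mem_cons_of_mem _ hB)) l j hTl
    calc θ ^ (A :: T).length = θ * θ ^ T.length := by rw [List.length_cons, pow_succ']
      _ ≤ A i l * T.prod l j :=
        mul_le_mul h1 h2 (le_of_lt (pow_pos hθ0 _)) (le_of_lt hAl)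
      _ ≤ ∑ m, A i m * T.prod m j :=
        Finset.single_le_sum (fun m _ => mul_nonneg (hA1 i m) (hT1 m j)) (Finset.mem_univ l)



/-- If `Q_1, …, Q_k` are row-stochastic matrices whose nonzero entries are at
least `θ`, and the product `Q_1⋯Q_k` has all entries positive, then the product
contracts Hilbert's seminorm with rate `1 - n·θ^k`. -/
theorem product_contraction_of_positive {n k : ℕ} (hn : 0 < n) (hk : 1 ≤ k)
    (θ : ℝ) (hθ0 : 0 < θ) (hθ1 : θ ≤ 1)
    (Q : Fin k → Matrix (Fin n) (Fin n) ℝ)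
    (hnn : ∀ m i j, 0 ≤ Q m i j) (hrow : ∀ m i, ∑ j, Q m i j = 1)
    (hmin : ∀ m i j, Q m i j ≠ 0 → θ ≤ Q m i j)
    (hpos : ∀ i j : Fin n, 0 < (List.ofFn Q).prod i j) :
    ∀ h : Fin n → ℝ,
      hilbertSeminorm ((List.ofFn Q).prod.mulVec h) ≤
        (1 - (n : ℝ) * θ ^ k) * hilbertSeminorm h := by
  intro h
  haveI : Nonempty (Fin n) := ⟨⟨0, hn⟩⟩
  set P := (List.ofFn Q).prod with hP
  have hmem : ∀ A ∈ List.ofFn Q, ∃ m, Q m = A := by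
    intro A hA
    rw [List.mem_ofFn] at hA
    exact hA
  have hPnn : ∀ i j, 0 ≤ P i j := myprod_nonneg _ (by
    intro A hA i j; obtain ⟨m, rfl⟩ := hmem A hA; exact hnn m i j)
  have hProw : ∀ i, ∑ j, P i j = 1 := myprod_rowsum _ (by
    intro A hA i; obtain ⟨m, rfl⟩ := hmem A hA; exact hrow m i)
  have hPge : ∀ i j, θ ^ k ≤ P i j := by
    intro i j
    have := prod_entry_ge θ hθ0 (List.ofFn Q)
      (by intro A hA i j; obtain ⟨m, rfl⟩ := hmem A hA; exact hnn m i j)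
      (by intro A hA i j; obtain ⟨m, rfl⟩ := hmem A hA; exact hmin m i j) i j (hpos i j)
    simpa using this
  set T := ⨆ i, h i with hT
  set B := ⨅ i, h i with hB
  have hhT : ∀ i, h i ≤ T := fun i => le_ciSup (Set.finite_range h).bddAbove i
  have hhB : ∀ i, B ≤ h i := fun i => ciInf_le (Set.finite_range h).bddBelow i
  have hTB : 0 ≤ T - B := by
    have := hhT (Classical.arbitrary (Fin n))
    have := hhB (Classical.arbitrary (Fin n))
    linarith
  set c := 1 - (n : ℝ) * θ ^ k with hc
  -- key pointwise estimate
  have key : ∀ i j, P.mulVec h i - P.mulVec h j ≤ c * (T - B) := by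
    intro i j
    have hdiff : P.mulVec h i - P.mulVec h j = ∑ l, (P i l - P j l) * h l := by
      simp [Matrix.mulVec, dotProduct, sub_mul, Finset.sum_sub_distrib]
    set p : Fin n → ℝ := fun l => max (P i l - P j l) 0 with hp
    set q : Fin n → ℝ := fun l => max (P j l - P i l) 0 with hq
    have hpq : ∀ l, P i l - P j l = p l - q l := by
      intro l
      simp only [hp, hq]
      rcases le_total (P i l) (P j l) with hle | hle
      · rw [max_eq_right (by linarith), max_eq_left (by linarith)]; ring
      · rw [max_eq_left (by linarith), max_eq_right (by linarith)]; ring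
    have hterm : ∀ l, (P i l - P j l) * h l ≤ p l * T - q l * B := by
      intro l
      have h1 := hhT l
      have h2 := hhB l
      have hp0 : 0 ≤ p l := le_max_right _ _
      have hq0 : 0 ≤ q l := le_max_right _ _
      have heq : (P i l - P j l) * h l = p l * h l - q l * h l := by
        rw [hpq l]; ring
      have hb1 : p l * h l ≤ p l * T := mul_le_mul_of_nonneg_left h1 hp0
      have hb2 : q l * B ≤ q l * h l := mul_le_mul_of_nonneg_left h2 hq0
      linarith
    have hsumeq : ∑ l, p l = ∑ l, q l := by
      have : ∑ l, (p l - q l) = 0 := by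
        calc ∑ l, (p l - q l) = ∑ l, (P i l - P j l) := by
              exact Finset.sum_congr rfl fun l _ => (hpq l).symm
          _ = (∑ l, P i l) - ∑ l, P j l := Finset.sum_sub_distrib _ _
          _ = 0 := by rw [hProw i, hProw j]; ring
      rw [Finset.sum_sub_distrib] at this
      linarith
    have hsp : ∑ l, p l ≤ c := by
      have hple : ∀ l, p l ≤ P i l - θ ^ k := by
        intro l
        apply max_le
        · have := hPge j l; linarith
        · have := hPge i l; linarith
      calc ∑ l, p l ≤ ∑ l, (P i l - θ ^ k) := Finset.sum_le_sum fun l _ => hple l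
        _ = 1 - (n : ℝ) * θ ^ k := by
            rw [Finset.sum_sub_distrib, hProw i]
            simp [mul_comm]
        _ = c := rfl
    calc P.mulVec h i - P.mulVec h j = ∑ l, (P i l - P j l) * h l := hdiff
      _ ≤ ∑ l, (p l * T - q l * B) := Finset.sum_le_sum fun l _ => hterm l
      _ = (∑ l, p l) * T - (∑ l, q l) * B := by
          rw [Finset.sum_sub_distrib, Finset.sum_mul, Finset.sum_mul]
      _ = (∑ l, p l) * (T - B) := by rw [← hsumeq]; ring
      _ ≤ c * (T - B) := mul_le_mul_of_nonneg_right hsp hTB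
  -- conclude
  rw [hilbertSeminorm, hilbertSeminorm]
  have h1 : (⨆ i, P.mulVec h i) ≤ c * (T - B) + ⨅ i, P.mulVec h i := by
    apply ciSup_le
    intro i
    have hle : P.mulVec h i - c * (T - B) ≤ ⨅ j, P.mulVec h j :=
      le_ciInf fun j => by linarith [key i j]
    linarith
  have h2 : (⨅ i, P.mulVec h i) ≤ ⨆ i, P.mulVec h i := by
    have hi := Classical.arbitrary (Fin n)
    exact le_trans (ciInf_le (Set.finite_range _).bddBelow hi)
      (le_ciSup (Set.finite_range _).bddAbove hi)
  linarith
end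

section
/- Let P be an n×n unichain row-stochastic matrix whose entries are rational numbers with common denominator M ≥ 1 (i.e., M·P has integer entries). Then every invariant measure of P, i.e., every row vector π ∈ ℝ^n with nonnegative entries summing to 1 and πP = π, has all its entries rational with reduced denominator at most n·M^{n−1}. -/
open Matrix Finset

section Graph
variable {n : ℕ} {P : Matrix (Fin n) (Fin n) ℝ}

lemma reaches_closed {S : Set (Fin n)}
    (hS : ∀ i ∈ S, ∀ j, 0 < P i j → j ∈ S) {i j : Fin n} (hi : i ∈ S)
    (h : Reaches P i j) : j ∈ S := by
  induction h with
  | refl => exact hi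
  | tail _ hbc ih => exact hS _ ih _ hbc

lemma exists_finalClass_subset (S : Set (Fin n))
    (hne : S.Nonempty) (hS : ∀ i ∈ S, ∀ j, 0 < P i j → j ∈ S) :
    ∃ C, IsFinalClass P C ∧ C ⊆ S := by
  obtain ⟨i0, hi0, hmin⟩ :=
    Set.exists_min_image S (fun i => ({j | Reaches P i j}).ncard) S.toFinite hne
  refine ⟨{j | Reaches P i0 j}, ⟨⟨i0, Relation.ReflTransGen.refl⟩, ?_, ?_⟩, ?_⟩
  · intro i hi j hj
    have hiS : i ∈ S := reaches_closed hS hi0 hi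
    have hsub : {k | Reaches P i k} ⊆ {k | Reaches P i0 k} := fun k hk =>
      Relation.ReflTransGen.trans hi hk
    have heq : {k | Reaches P i k} = {k | Reaches P i0 k} :=
      Set.eq_of_subset_of_ncard_le hsub (hmin i hiS) (Set.toFinite _)
    have : j ∈ {k | Reaches P i k} := heq.symm ▸ hj
    exact this
  · intro i hi j harc
    exact Relation.ReflTransGen.tail hi harc
  · intro j hj
    exact reaches_closed hS hi0 hj

end Graph

section Kernel
variable {n : ℕ} {P : Matrix (Fin n) (Fin n) ℝ}

lemma vecMul_apply' (v : Fin n → ℝ) (M : Matrix (Fin n) (Fin n) ℝ) (k : Fin n) :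
    (v ᵥ* M) k = ∑ j, v j * M j k := rfl

lemma support_pos (hnn : ∀ i j, 0 ≤ P i j) {w : Fin n → ℝ}
    (hw0 : ∀ i, 0 ≤ w i) (hw : w ᵥ* P = w) {i j : Fin n}
    (hi : 0 < w i) (hij : Reaches P i j) : 0 < w j := by
  induction hij with
  | refl => exact hi
  | @tail b c _ hbc ih =>
    have hc : w c = ∑ k, w k * P k c := by rw [← congrFun hw c, vecMul_apply']
    have : w b * P b c ≤ ∑ k, w k * P k c :=
      Finset.single_le_sum (f := fun k => w k * P k c)
        (fun k _ => mul_nonneg (hw0 k) (hnn k c)) (mem_univ b)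
    have := mul_pos ih hbc
    linarith

lemma abs_invariant (hnn : ∀ i j, 0 ≤ P i j) (hrow : ∀ i, ∑ j, P i j = 1)
    {v : Fin n → ℝ} (hv : v ᵥ* P = v) :
    (fun i => |v i|) ᵥ* P = fun i => |v i| := by
  have key : ∀ j, |v j| ≤ ∑ i, |v i| * P i j := by
    intro j
    have h1 : v j = ∑ i, v i * P i j := by rw [← congrFun hv j, vecMul_apply']
    calc |v j| = |∑ i, v i * P i j| := by rw [← h1]
      _ ≤ ∑ i, |v i * P i j| := Finset.abs_sum_le_sum_abs _ _
      _ = ∑ i, |v i| * P i j := by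
          refine Finset.sum_congr rfl fun i _ => ?_
          rw [abs_mul, abs_of_nonneg (hnn i j)]
  have tot : ∑ j, (∑ i, |v i| * P i j - |v j|) = 0 := by
    rw [Finset.sum_sub_distrib, Finset.sum_comm]
    have : ∀ i : Fin n, ∑ j, |v i| * P i j = |v i| := by
      intro i; rw [← Finset.mul_sum, hrow i, mul_one]
    rw [Finset.sum_congr rfl fun i _ => this i, sub_self]
  have hz := (Finset.sum_eq_zero_iff_of_nonneg
    (fun j _ => by have := key j; linarith)).mp tot
  funext j
  have := hz j (mem_univ j)
  rw [vecMul_apply']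
  linarith

lemma kernel_lemma (hnn : ∀ i j, 0 ≤ P i j) (hrow : ∀ i, ∑ j, P i j = 1)
    (huni : Unichain P) {v : Fin n → ℝ}
    (hv : v ᵥ* P = v) (hsum : ∑ i, v i = 0) : v = 0 := by
  have habs := abs_invariant hnn hrow hv
  by_cases hpos : ∃ i, 0 < v i
  · by_cases hneg : ∃ i, v i < 0
    · exfalso
      -- positive and negative parts
      set up : Fin n → ℝ := fun i => (|v i| + v i) / 2 with hup
      set um : Fin n → ℝ := fun i => (|v i| - v i) / 2 with hum
      have hup_inv : up ᵥ* P = up := by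
        funext j
        rw [vecMul_apply']
        have : ∀ i, up i * P i j = (|v i| * P i j + v i * P i j) / 2 := by
          intro i; rw [hup]; ring
        rw [Finset.sum_congr rfl fun i _ => this i, ← Finset.sum_div,
          Finset.sum_add_distrib]
        rw [show ∑ i, |v i| * P i j = |v j| from congrFun habs j,
          show ∑ i, v i * P i j = v j from congrFun hv j]
      have hum_inv : um ᵥ* P = um := by
        funext j
        rw [vecMul_apply']
        have : ∀ i, um i * P i j = (|v i| * P i j - v i * P i j) / 2 := by
          intro i; rw [hum]; ring
        rw [Finset.sum_congr rfl fun i _ => this i, ← Finset.sum_div,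
          Finset.sum_sub_distrib]
        rw [show ∑ i, |v i| * P i j = |v j| from congrFun habs j,
          show ∑ i, v i * P i j = v j from congrFun hv j]
      have hup0 : ∀ i, 0 ≤ up i := fun i => by
        have := abs_nonneg (v i); have := neg_abs_le (v i); rw [hup]; dsimp; linarith
      have hum0 : ∀ i, 0 ≤ um i := fun i => by
        have := le_abs_self (v i); rw [hum]; dsimp; linarith
      have hup_pos : ∀ i, 0 < up i ↔ 0 < v i := by
        intro i
        constructor
        · intro h
          by_contra hc
          push_neg at hc
          rw [hup] at h; dsimp at h
          rw [abs_of_nonpos hc] at h; linarith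
        · intro h; rw [hup]; dsimp; rw [abs_of_pos h]; linarith
      have hum_pos : ∀ i, 0 < um i ↔ v i < 0 := by
        intro i
        constructor
        · intro h
          by_contra hc
          push_neg at hc
          rw [hum] at h; dsimp at h
          rw [abs_of_nonneg hc] at h; linarith
        · intro h; rw [hum]; dsimp; rw [abs_of_neg h]; linarith
      obtain ⟨ip, hip⟩ := hpos
      obtain ⟨im, him⟩ := hneg
      obtain ⟨Cp, hCp, hCpsub⟩ := exists_finalClass_subset (P := P) {i | 0 < v i}
        ⟨ip, hip⟩ (by
          intro i hi j harc
          have : 0 < up j := support_pos hnn hup0 hup_inv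
            ((hup_pos i).mpr hi) (Relation.ReflTransGen.single harc)
          exact (hup_pos j).mp this)
      obtain ⟨Cm, hCm, hCmsub⟩ := exists_finalClass_subset (P := P) {i | v i < 0}
        ⟨im, him⟩ (by
          intro i hi j harc
          have : 0 < um j := support_pos hnn hum0 hum_inv
            ((hum_pos i).mpr hi) (Relation.ReflTransGen.single harc)
          exact (hum_pos j).mp this)
      obtain ⟨C0, _, huniq⟩ := huni
      have h1 : Cp = C0 := huniq Cp hCp
      have h2 : Cm = C0 := huniq Cm hCm
      obtain ⟨c, hc⟩ := hCm.1
      have hcp : 0 < v c := hCpsub (by rw [h1, ← h2]; exact hc)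
      have hcm : v c < 0 := hCmsub hc
      linarith
    · push_neg at hneg
      funext i
      have := (Finset.sum_eq_zero_iff_of_nonneg (fun i _ => hneg i)).mp hsum i (mem_univ i)
      simpa using this
  · push_neg at hpos
    funext i
    have := (Finset.sum_eq_zero_iff_of_nonpos (fun i _ => hpos i)).mp hsum i (mem_univ i)
    simpa using this

end Kernel

section Amat
variable {n : ℕ}

/-- The matrix `(1-P)ᵀ` with row `r` replaced by all ones. -/
def Amat (P : Matrix (Fin n) (Fin n) ℝ) (r : Fin n) : Matrix (Fin n) (Fin n) ℝ :=
  Matrix.of fun k j => if k = r then 1 else ((1 : Matrix (Fin n) (Fin n) ℝ) - P) j k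

variable {P : Matrix (Fin n) (Fin n) ℝ}

lemma col_sum_L (hrow : ∀ i, ∑ j, P i j = 1) (j : Fin n) :
    ∑ k, ((1 : Matrix (Fin n) (Fin n) ℝ) - P) j k = 0 := by
  simp only [Matrix.sub_apply, Finset.sum_sub_distrib, hrow j, Matrix.one_apply]
  simp

lemma ker_Amat (hnn : ∀ i j, 0 ≤ P i j) (hrow : ∀ i, ∑ j, P i j = 1)
    (huni : Unichain P) (r : Fin n) {v : Fin n → ℝ}
    (hAv : Amat P r *ᵥ v = 0) : v = 0 := by
  have happ : ∀ k, ∑ j, (if k = r then (1:ℝ) else ((1 : Matrix (Fin n) (Fin n) ℝ) - P) j k) * v j = 0 :=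
    fun k => congrFun hAv k
  have hsum : ∑ j, v j = 0 := by
    have := happ r
    simpa using this
  have hS : ∀ k, k ≠ r → ∑ j, v j * ((1 : Matrix (Fin n) (Fin n) ℝ) - P) j k = 0 := by
    intro k hk
    have := happ k
    simp only [if_neg hk] at this
    rw [Finset.sum_congr rfl fun j _ => mul_comm (v j) _]
    exact this
  have hSr : ∑ j, v j * ((1 : Matrix (Fin n) (Fin n) ℝ) - P) j r = 0 := by
    have htot : ∑ k, ∑ j, v j * ((1 : Matrix (Fin n) (Fin n) ℝ) - P) j k = 0 := by
      rw [Finset.sum_comm]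
      have : ∀ j : Fin n, ∑ k, v j * ((1 : Matrix (Fin n) (Fin n) ℝ) - P) j k = 0 := by
        intro j; rw [← Finset.mul_sum, col_sum_L hrow j, mul_zero]
      rw [Finset.sum_congr rfl fun j _ => this j]; simp
    have herase : ∑ k ∈ Finset.univ.erase r, ∑ j, v j * ((1 : Matrix (Fin n) (Fin n) ℝ) - P) j k = 0 :=
      Finset.sum_eq_zero fun k hk => hS k (Finset.mem_erase.mp hk).1
    have := Finset.add_sum_erase Finset.univ
      (fun k => ∑ j, v j * ((1 : Matrix (Fin n) (Fin n) ℝ) - P) j k) (mem_univ r)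
    rw [herase, htot] at this
    linarith
  have hvL : v ᵥ* ((1 : Matrix (Fin n) (Fin n) ℝ) - P) = 0 := by
    funext k
    rw [vecMul_apply']
    by_cases hk : k = r
    · subst hk; exact hSr
    · exact hS k hk
  have hvP : v ᵥ* P = v := by
    rw [Matrix.vecMul_sub, Matrix.vecMul_one] at hvL
    have := sub_eq_zero.mp hvL
    exact this.symm
  exact kernel_lemma hnn hrow huni hvP hsum

lemma det_Amat_ne_zero (hnn : ∀ i j, 0 ≤ P i j) (hrow : ∀ i, ∑ j, P i j = 1)
    (huni : Unichain P) (r : Fin n) : (Amat P r).det ≠ 0 := by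
  intro h
  obtain ⟨v, hvne, hv0⟩ := Matrix.exists_mulVec_eq_zero_iff.mpr h
  exact hvne (ker_Amat hnn hrow huni r hv0)

lemma Amat_mulVec_pi (hrow : ∀ i, ∑ j, P i j = 1)
    {π : Fin n → ℝ} (hπ1 : ∑ i, π i = 1) (hinv : π ᵥ* P = π) (r : Fin n) :
    Amat P r *ᵥ π = Pi.single r 1 := by
  funext k
  show ∑ j, (if k = r then (1:ℝ) else ((1 : Matrix (Fin n) (Fin n) ℝ) - P) j k) * π j = _
  by_cases hk : k = r
  · subst hk
    simp [hπ1]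
  · simp only [if_neg hk, Pi.single_apply, if_neg hk]
    have : ∑ j, ((1 : Matrix (Fin n) (Fin n) ℝ) - P) j k * π j
        = π k - (π ᵥ* P) k := by
      rw [vecMul_apply']
      simp only [Matrix.sub_apply, Matrix.one_apply]
      rw [Finset.sum_congr rfl (fun j _ => by ring_nf : ∀ j ∈ Finset.univ,
        ((if j = k then (1:ℝ) else 0) - P j k) * π j
          = (if j = k then (1:ℝ) else 0) * π j - π j * P j k)]
      rw [Finset.sum_sub_distrib]
      congr 1
      simp
    rw [this, hinv, sub_self]

lemma cramer_pi (hnn : ∀ i j, 0 ≤ P i j) (hrow : ∀ i, ∑ j, P i j = 1)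
    (huni : Unichain P) {π : Fin n → ℝ} (hπ1 : ∑ i, π i = 1)
    (hinv : π ᵥ* P = π) (r i : Fin n) :
    (Amat P r).det * π i = ((Amat P r).updateCol i (Pi.single r 1)).det := by
  have hb := Amat_mulVec_pi hrow hπ1 hinv r
  have hc := Matrix.mulVec_cramer (Amat P r) (Pi.single r 1)
  have h0 : Amat P r *ᵥ (Matrix.cramer (Amat P r) (Pi.single r 1)
      - (Amat P r).det • π) = 0 := by
    rw [Matrix.mulVec_sub, hc, Matrix.mulVec_smul, hb, sub_self]
  have := ker_Amat hnn hrow huni r h0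
  have h1 : Matrix.cramer (Amat P r) (Pi.single r 1) = (Amat P r).det • π :=
    sub_eq_zero.mp this
  have := congrFun h1 i
  rw [Matrix.cramer_apply] at this
  rw [this, Pi.smul_apply, smul_eq_mul]

end Amat

section Indep
variable {n : ℕ} {P : Matrix (Fin n) (Fin n) ℝ}

lemma det_updateRow_finset_sum (A : Matrix (Fin n) (Fin n) ℝ) (r : Fin n)
    (t : Finset (Fin n)) (g : Fin n → Fin n → ℝ) :
    (A.updateRow r (∑ k ∈ t, g k)).det = ∑ k ∈ t, (A.updateRow r (g k)).det := by
  classical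
  induction t using Finset.induction_on with
  | empty =>
    simp only [Finset.sum_empty]
    exact Matrix.det_eq_zero_of_row_eq_zero r (fun j => by simp)
  | insert _ _ h ih =>
    rw [Finset.sum_insert h, Matrix.det_updateRow_add, ih, Finset.sum_insert h]

lemma det_Amat_indep (hrow : ∀ i, ∑ j, P i j = 1) (r s : Fin n) :
    (Amat P r).det = (Amat P s).det := by
  rcases eq_or_ne r s with h | hrs
  · rw [h]
  set B : Matrix (Fin n) (Fin n) ℝ :=
    Matrix.of fun k j => ((1 : Matrix (Fin n) (Fin n) ℝ) - P) j k with hB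
  have hA : ∀ u : Fin n, Amat P u = B.updateRow u (fun _ => 1) := by
    intro u
    ext k j
    by_cases hk : k = u
    · subst hk; simp [Amat, Matrix.updateRow_apply]
    · simp [Amat, Matrix.updateRow_apply, hk, hB]
  have hBr : B r = (-1 : ℝ) • ∑ k ∈ Finset.univ.erase r, B k := by
    funext j
    have h1 := Finset.add_sum_erase Finset.univ (fun k => B k j) (mem_univ r)
    have h2 : ∑ k, B k j = 0 := col_sum_L hrow j
    rw [Pi.smul_apply, Finset.sum_apply (g := fun k => (B k : Fin n → ℝ))]
    simp only [Finset.sum_apply, Pi.smul_apply, smul_eq_mul, neg_one_mul, Pi.neg_apply]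
    have := h1.trans h2
    linarith
  set C : Matrix (Fin n) (Fin n) ℝ := B.updateRow s (fun _ => 1) with hC
  set D : Matrix (Fin n) (Fin n) ℝ := C.updateRow r (B s) with hD
  have hsplit : (Amat P s).det = -D.det := by
    have h0 : Amat P s = C := hA s
    have h1 : C = C.updateRow r (C r) := (Matrix.updateRow_eq_self C r).symm
    have h2 : C r = B r := Matrix.updateRow_ne hrs
    have h3 : C.updateRow r (B r)
        = C.updateRow r ((-1 : ℝ) • ∑ k ∈ Finset.univ.erase r, B k) := by
      rw [← hBr]
    have h4 : ∀ k ∈ Finset.univ.erase r, k ≠ s → (C.updateRow r (B k)).det = 0 := by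
      intro k hk hks
      have hkr : k ≠ r := (Finset.mem_erase.mp hk).1
      refine Matrix.det_zero_of_row_eq (Ne.symm hkr) ?_
      rw [Matrix.updateRow_self, Matrix.updateRow_ne hkr, hC, Matrix.updateRow_ne hks]
    rw [h0, h1, h2, h3, Matrix.det_updateRow_smul, det_updateRow_finset_sum (g := fun k => (B k : Fin n → ℝ))]
    rw [Finset.sum_eq_single_of_mem s
      (Finset.mem_erase.mpr ⟨Ne.symm hrs, mem_univ s⟩) h4]
    simp [hD]
  have hswap : Amat P r = D.submatrix (Equiv.swap r s) id := by
    ext k j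
    rw [Matrix.submatrix_apply, id_eq]
    by_cases hk : k = r
    · rw [hk, Equiv.swap_apply_left, hD, Matrix.updateRow_ne (Ne.symm hrs), hC,
        Matrix.updateRow_self, hA r, Matrix.updateRow_self]
    · by_cases hks : k = s
      · rw [hks, Equiv.swap_apply_right, hD, Matrix.updateRow_self, hA r,
          Matrix.updateRow_ne (Ne.symm hrs)]
      · rw [Equiv.swap_apply_of_ne_of_ne hk hks, hD, Matrix.updateRow_ne hk, hC,
          Matrix.updateRow_ne hks, hA r, Matrix.updateRow_ne hk]
  have : (Amat P r).det = -D.det := by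
    rw [hswap, Matrix.det_permute, Equiv.Perm.sign_swap hrs]
    simp
  rw [this, hsplit]

end Indep

section IntDet

lemma int_det {n : ℕ} (M : ℕ) (B : Matrix (Fin n) (Fin n) ℝ) (r : Fin n)
    (hr : ∀ j, ∃ z : ℤ, B r j = (z : ℝ))
    (ho : ∀ k, k ≠ r → ∀ j, ∃ z : ℤ, (M : ℝ) * B k j = (z : ℝ)) :
    ∃ z : ℤ, (M : ℝ) ^ (n - 1) * B.det = (z : ℝ) := by
  have hm : ((M : ℝ) ^ (n - 1) * B.det) ∈ (Int.castRingHom ℝ).range := by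
    rw [Matrix.det_apply', Finset.mul_sum]
    refine Subring.sum_mem _ fun σ _ => ?_
    have hterm : (M : ℝ) ^ (n - 1) * (((Equiv.Perm.sign σ : ℤ) : ℝ) * ∏ i, B (σ i) i)
        = ((Equiv.Perm.sign σ : ℤ) : ℝ)
          * (B r (σ⁻¹ r) * ∏ i ∈ Finset.univ.erase (σ⁻¹ r), ((M : ℝ) * B (σ i) i)) := by
      rw [Finset.prod_mul_distrib, Finset.prod_const,
        Finset.card_erase_of_mem (mem_univ _), Finset.card_univ, Fintype.card_fin]
      have hfac : ∏ i, B (σ i) i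
          = B (σ (σ⁻¹ r)) (σ⁻¹ r) * ∏ i ∈ Finset.univ.erase (σ⁻¹ r), B (σ i) i :=
        (Finset.mul_prod_erase Finset.univ _ (mem_univ _)).symm
      rw [hfac, ← Equiv.Perm.mul_apply, mul_inv_cancel, Equiv.Perm.one_apply]
      ring
    rw [hterm]
    refine Subring.mul_mem _ ⟨(Equiv.Perm.sign σ : ℤ), by simp⟩ ?_
    refine Subring.mul_mem _ ?_ ?_
    · obtain ⟨z, hz⟩ := hr (σ⁻¹ r)
      exact ⟨z, by simpa using hz.symm⟩
    · refine Subring.prod_mem _ fun i hi => ?_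
      have hir : σ i ≠ r := by
        intro h
        have h2 : i = σ⁻¹ r := by rw [← h, ← Equiv.Perm.mul_apply, inv_mul_cancel, Equiv.Perm.one_apply]
        exact (Finset.mem_erase.mp hi).1 h2
      obtain ⟨z, hz⟩ := ho (σ i) hir i
      exact ⟨z, by simpa using hz.symm⟩
  obtain ⟨z, hz⟩ := hm
  exact ⟨z, by simpa using hz.symm⟩

end IntDet

section Substoch

lemma det_one_sub_substoch :
    ∀ n, ∀ Q : Matrix (Fin n) (Fin n) ℝ, (∀ i j, 0 ≤ Q i j) → (∀ i, ∑ j, Q i j ≤ 1) →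
      0 ≤ (1 - Q).det ∧ (1 - Q).det ≤ 1 := by
  intro n
  induction n with
  | zero =>
    intro Q _ _
    rw [Matrix.det_isEmpty]
    norm_num
  | succ m ih =>
    intro Q hQ0 hQ1
    set e : Fin 1 ⊕ Fin m ≃ Fin (m + 1) :=
      finSumFinEquiv.trans (finCongr (Nat.add_comm 1 m)) with he
    set i₀ : Fin (m + 1) := e (Sum.inl 0) with hi₀
    have hsplit : ∀ f : Fin (m + 1) → ℝ,
        ∑ x, f x = f i₀ + ∑ k : Fin m, f (e (Sum.inr k)) := by
      intro f
      rw [← Equiv.sum_comp e f, Fintype.sum_sum_type, Fin.sum_univ_one]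
    have hQle : Q i₀ i₀ ≤ 1 :=
      le_trans (Finset.single_le_sum (fun j _ => hQ0 i₀ j) (mem_univ i₀)) (hQ1 i₀)
    by_cases h1 : Q i₀ i₀ = 1
    · have h3 := Finset.add_sum_erase Finset.univ (fun k => Q i₀ k) (mem_univ i₀)
      have h4 : ∑ k ∈ Finset.univ.erase i₀, Q i₀ k ≤ 0 := by
        have := hQ1 i₀
        rw [h1] at h3
        linarith
      have h6 : ∑ k ∈ Finset.univ.erase i₀, Q i₀ k = 0 :=
        le_antisymm h4 (Finset.sum_nonneg fun k _ => hQ0 _ _)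
      have hoff : ∀ j, j ≠ i₀ → Q i₀ j = 0 := fun j hj =>
        (Finset.sum_eq_zero_iff_of_nonneg (fun k _ => hQ0 _ _)).mp h6 j
          (Finset.mem_erase.mpr ⟨hj, mem_univ j⟩)
      have hrow0 : ∀ j, (1 - Q) i₀ j = 0 := by
        intro j
        rw [Matrix.sub_apply]
        by_cases hj : j = i₀
        · rw [hj, Matrix.one_apply_eq, h1, sub_self]
        · rw [Matrix.one_apply_ne fun h => hj h.symm, hoff j hj, sub_zero]
      rw [Matrix.det_eq_zero_of_row_eq_zero i₀ hrow0]
      norm_num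
    · have ha : 0 < 1 - Q i₀ i₀ := sub_pos.mpr (lt_of_le_of_ne hQle h1)
      set a : ℝ := 1 - Q i₀ i₀ with haa
      set A1 : Matrix (Fin 1) (Fin 1) ℝ := Matrix.of fun _ _ => a with hA1
      set Bb : Matrix (Fin 1) (Fin m) ℝ :=
        Matrix.of fun _ k => (1 - Q) i₀ (e (Sum.inr k)) with hBb
      set Cb : Matrix (Fin m) (Fin 1) ℝ :=
        Matrix.of fun j _ => (1 - Q) (e (Sum.inr j)) i₀ with hCb
      set D : Matrix (Fin m) (Fin m) ℝ :=
        Matrix.of fun j k => (1 - Q) (e (Sum.inr j)) (e (Sum.inr k)) with hD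
      have hblock : (1 - Q).submatrix e e = Matrix.fromBlocks A1 Bb Cb D := by
        ext i j
        cases i with
        | inl i =>
          cases j with
          | inl j =>
            rw [Fin.eq_zero i, Fin.eq_zero j]
            show (1 - Q) (e (Sum.inl 0)) (e (Sum.inl 0)) = A1 0 0
            rw [hA1, ← hi₀, Matrix.sub_apply, Matrix.one_apply_eq]
            rfl
          | inr j =>
            rw [Fin.eq_zero i]
            rfl
        | inr i =>
          cases j with
          | inl j =>
            rw [Fin.eq_zero j]
            rfl
          | inr j => rfl
      letI hInv : Invertible A1 := by
        refine ⟨Matrix.of fun _ _ => a⁻¹, ?_, ?_⟩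
        · ext i j
          rw [Fin.eq_zero i, Fin.eq_zero j]
          simp [hA1, Matrix.mul_apply, Matrix.one_apply, inv_mul_cancel₀ ha.ne']
        · ext i j
          rw [Fin.eq_zero i, Fin.eq_zero j]
          simp [hA1, Matrix.mul_apply, Matrix.one_apply, mul_inv_cancel₀ ha.ne']
      have hinvA : (⅟A1 : Matrix (Fin 1) (Fin 1) ℝ) = Matrix.of fun _ _ => a⁻¹ := rfl
      have hdet : (1 - Q).det = a * (D - Cb * ⅟A1 * Bb).det := by
        rw [← Matrix.det_submatrix_equiv_self e (1 - Q), hblock,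
          Matrix.det_fromBlocks₁₁]
        congr 1
        rw [Matrix.det_fin_one, hA1]
        rfl
      have hne : ∀ j : Fin m, e (Sum.inr j) ≠ i₀ := by
        intro j h
        rw [hi₀] at h
        exact Sum.inr_ne_inl (e.injective h)
      set Q' : Matrix (Fin m) (Fin m) ℝ := Matrix.of fun j k =>
        Q (e (Sum.inr j)) (e (Sum.inr k))
          + Q (e (Sum.inr j)) i₀ * Q i₀ (e (Sum.inr k)) / a with hQ'
      have hSchur : D - Cb * ⅟A1 * Bb = 1 - Q' := by
        ext j k
        have hCB : (Cb * ⅟A1 * Bb) j k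
            = (1 - Q) (e (Sum.inr j)) i₀ * a⁻¹ * (1 - Q) i₀ (e (Sum.inr k)) := by
          rw [hinvA]
          simp [Matrix.mul_apply, Fin.sum_univ_one, hCb, hBb]
        rw [Matrix.sub_apply, Matrix.sub_apply, hCB]
        have e1 : (1 - Q) (e (Sum.inr j)) i₀ = -Q (e (Sum.inr j)) i₀ := by
          rw [Matrix.sub_apply, Matrix.one_apply_ne (hne j), zero_sub]
        have e2 : (1 - Q) i₀ (e (Sum.inr k)) = -Q i₀ (e (Sum.inr k)) := by
          rw [Matrix.sub_apply, Matrix.one_apply_ne (Ne.symm (hne k)), zero_sub]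
        have e3 : D j k
            = (1 : Matrix (Fin m) (Fin m) ℝ) j k - Q (e (Sum.inr j)) (e (Sum.inr k)) := by
          rw [hD]
          show (1 - Q) (e (Sum.inr j)) (e (Sum.inr k)) = _
          rw [Matrix.sub_apply]
          congr 1
          by_cases hjk : j = k
          · rw [hjk, Matrix.one_apply_eq, Matrix.one_apply_eq]
          · rw [Matrix.one_apply_ne (fun h => hjk (Sum.inr.inj (e.injective h))),
              Matrix.one_apply_ne hjk]
        rw [e1, e2, e3, hQ']
        show _ = (1 : Matrix (Fin m) (Fin m) ℝ) j k - (Q _ _ + Q _ _ * Q _ _ / a)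
        field_simp
        ring
      have hQ'0 : ∀ j k, 0 ≤ Q' j k := by
        intro j k
        rw [hQ']
        exact add_nonneg (hQ0 _ _)
          (div_nonneg (mul_nonneg (hQ0 _ _) (hQ0 _ _)) ha.le)
      have hQ'1 : ∀ j, ∑ k, Q' j k ≤ 1 := by
        intro j
        have hs1 := hQ1 (e (Sum.inr j))
        rw [hsplit (fun k => Q (e (Sum.inr j)) k)] at hs1
        have hs2 := hQ1 i₀
        rw [hsplit (fun k => Q i₀ k)] at hs2
        have hsum : ∑ k, Q' j k = ∑ k, Q (e (Sum.inr j)) (e (Sum.inr k))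
            + Q (e (Sum.inr j)) i₀ / a * ∑ k, Q i₀ (e (Sum.inr k)) := by
          rw [hQ']
          show ∑ k, (Q _ (e (Sum.inr k)) + Q _ i₀ * Q i₀ (e (Sum.inr k)) / a) = _
          rw [Finset.sum_add_distrib, Finset.mul_sum]
          congr 1
          exact Finset.sum_congr rfl fun k _ => by ring
        rw [hsum]
        have ht0 : 0 ≤ Q (e (Sum.inr j)) i₀ := hQ0 _ _
        have hS2a : ∑ k, Q i₀ (e (Sum.inr k)) ≤ a := by rw [haa]; linarith
        have hS20 : 0 ≤ ∑ k, Q i₀ (e (Sum.inr k)) :=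
          Finset.sum_nonneg fun k _ => hQ0 _ _
        have hkey : Q (e (Sum.inr j)) i₀ / a * ∑ k, Q i₀ (e (Sum.inr k))
            ≤ Q (e (Sum.inr j)) i₀ := by
          have := mul_le_mul_of_nonneg_left hS2a (div_nonneg ht0 ha.le)
          rwa [div_mul_cancel₀ _ ha.ne'] at this
        linarith
      obtain ⟨hd0, hd1⟩ := ih Q' hQ'0 hQ'1
      rw [hdet, hSchur]
      have ha1 : a ≤ 1 := by
        rw [haa]
        have := hQ0 i₀ i₀
        linarith
      constructor
      · exact mul_nonneg ha.le hd0
      · calc a * (1 - Q').det ≤ 1 * 1 :=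
            mul_le_mul ha1 hd1 hd0 zero_le_one
          _ = 1 := one_mul 1

end Substoch

section Gmat
variable {n : ℕ}

def Rmat (P : Matrix (Fin n) (Fin n) ℝ) (i : Fin n) : Matrix (Fin n) (Fin n) ℝ :=
  Matrix.of fun j k => if j = i ∨ k = i then (0 : ℝ) else P j k

def Hmat (P : Matrix (Fin n) (Fin n) ℝ) (i : Fin n) : Matrix (Fin n) (Fin n) ℝ :=
  1 - (Rmat P i)ᵀ

def Umat (n : ℕ) (i : Fin n) : Matrix (Fin n) (Fin n) ℝ :=
  (1 : Matrix (Fin n) (Fin n) ℝ).updateRow i (fun _ => 1)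

def Gmat (P : Matrix (Fin n) (Fin n) ℝ) (i : Fin n) : Matrix (Fin n) (Fin n) ℝ :=
  (Amat P i).updateCol i (Pi.single i 1)

variable {P : Matrix (Fin n) (Fin n) ℝ}

lemma det_Umat (i : Fin n) : (Umat n i).det = 1 := by
  have hvec : (fun _ : Fin n => (1 : ℝ))
      = ∑ k, (fun _ : Fin n => (1 : ℝ)) k • (1 : Matrix (Fin n) (Fin n) ℝ) k := by
    funext j
    rw [Finset.sum_apply (g := fun k => ((fun _ : Fin n => (1 : ℝ)) k • (1 : Matrix (Fin n) (Fin n) ℝ) k : Fin n → ℝ))]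
    simp [Matrix.one_apply, Finset.sum_apply]
  rw [Umat, hvec, Matrix.det_updateRow_sum]
  simp

lemma Hval (i k m : Fin n) :
    Hmat P i k m = (if k = m then (1:ℝ) else 0) - (if m = i ∨ k = i then 0 else P m k) := by
  simp [Hmat, Rmat, Matrix.sub_apply, Matrix.one_apply, Matrix.transpose_apply]

lemma G_eq (i : Fin n) : Gmat P i = Hmat P i * Umat n i := by
  ext k j
  rw [Matrix.mul_apply, ← Finset.add_sum_erase _ _ (mem_univ i)]
  have hUi : ∀ j', Umat n i i j' = 1 := by
    intro j'; rw [Umat, Matrix.updateRow_self]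
  have hUm : ∀ m, m ≠ i → ∀ j', Umat n i m j' = (1 : Matrix (Fin n) (Fin n) ℝ) m j' := by
    intro m hm j'; rw [Umat, Matrix.updateRow_ne hm]
  have hsum2 : ∑ m ∈ Finset.univ.erase i, Hmat P i k m * Umat n i m j
      = if j ∈ Finset.univ.erase i then Hmat P i k j else 0 := by
    rw [Finset.sum_congr rfl (fun m hm => by
      rw [hUm m (Finset.mem_erase.mp hm).1, Matrix.one_apply, mul_ite, mul_one, mul_zero])]
    exact Finset.sum_ite_eq' _ _ _
  rw [hsum2, hUi]
  have hG : Gmat P i k j = if j = i then (if k = i then (1:ℝ) else 0) else Amat P i k j := by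
    rw [Gmat, Matrix.updateCol_apply]
    by_cases hj : j = i
    · rw [if_pos hj, if_pos hj, Pi.single_apply]
    · rw [if_neg hj, if_neg hj]
  rw [hG, mul_one]
  by_cases hj : j = i
  · rw [if_pos hj,
      if_neg (show j ∉ Finset.univ.erase i by simp [hj]), add_zero, Hval]
    simp
  · rw [if_neg hj, if_pos (Finset.mem_erase.mpr ⟨hj, mem_univ j⟩)]
    by_cases hk : k = i
    · rw [hk, Hval, Hval]
      have hji : ¬ i = j := fun h => hj h.symm
      simp [hji, Amat]
    · rw [Hval, Hval, if_neg hk, if_pos (Or.inl rfl)]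
      have hcond : ¬ (j = i ∨ k = i) := by tauto
      rw [if_neg hcond]
      simp only [Amat, Matrix.of_apply, if_neg hk, Matrix.sub_apply, Matrix.one_apply]
      have hswap : (if k = j then (1:ℝ) else 0) = (if j = k then (1:ℝ) else 0) := by
        by_cases h : j = k
        · rw [if_pos h, if_pos h.symm]
        · rw [if_neg h, if_neg fun hh => h hh.symm]
      rw [hswap]
      ring

lemma det_Gmat_bounds (hnn : ∀ i j, 0 ≤ P i j) (hrow : ∀ i, ∑ j, P i j = 1)
    (i : Fin n) : 0 ≤ (Gmat P i).det ∧ (Gmat P i).det ≤ 1 := by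
  have hR0 : ∀ j k, 0 ≤ Rmat P i j k := by
    intro j k
    rw [Rmat]
    show 0 ≤ if j = i ∨ k = i then (0:ℝ) else P j k
    split
    · exact le_refl 0
    · exact hnn j k
  have hR1 : ∀ j, ∑ k, Rmat P i j k ≤ 1 := by
    intro j
    calc ∑ k, Rmat P i j k ≤ ∑ k, P j k := by
          refine Finset.sum_le_sum fun k _ => ?_
          rw [Rmat]
          show (if j = i ∨ k = i then (0:ℝ) else P j k) ≤ P j k
          split
          · exact hnn j k
          · exact le_refl _
      _ = 1 := hrow j
  have hH : Hmat P i = (1 - Rmat P i)ᵀ := by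
    rw [Hmat, Matrix.transpose_sub, Matrix.transpose_one]
  have : (Gmat P i).det = (1 - Rmat P i).det := by
    rw [G_eq, Matrix.det_mul, det_Umat, mul_one, hH, Matrix.det_transpose]
  rw [this]
  exact det_one_sub_substoch n (Rmat P i) hR0 hR1

end Gmat

/-- Any invariant measure of a unichain row-stochastic matrix with rational
entries of common denominator `M` has rational entries with (reduced)
denominators at most `n·M^{n-1}`. -/
theorem invariant_measure_denominator_bound {n : ℕ} (hn : 0 < n)
    (P : Matrix (Fin n) (Fin n) ℝ)
    (hnn : ∀ i j, 0 ≤ P i j) (hrow : ∀ i, ∑ j, P i j = 1)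
    (huni : Unichain P)
    (M : ℕ) (hM : 1 ≤ M)
    (hrat : ∀ i j, ∃ z : ℤ, (M : ℝ) * P i j = (z : ℝ))
    (π : Fin n → ℝ) (hπ0 : ∀ i, 0 ≤ π i) (hπ1 : ∑ i, π i = 1)
    (hinv : Matrix.vecMul π P = π) :
    ∀ i, ∃ q : ℚ, π i = (q : ℝ) ∧ q.den ≤ n * M ^ (n - 1) := by
  intro i
  set r₀ : Fin n := ⟨0, hn⟩ with hr₀
  set d : ℝ := (Amat P r₀).det with hd
  have hdi : ∀ j : Fin n, (Amat P j).det = d := fun j => det_Amat_indep hrow j r₀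
  have hcr : ∀ j : Fin n, d * π j = (Gmat P j).det := by
    intro j
    rw [← hdi j]
    exact cramer_pi hnn hrow huni hπ1 hinv j j
  have hdsum : d = ∑ j, (Gmat P j).det := by
    calc d = d * ∑ j, π j := by rw [hπ1, mul_one]
      _ = ∑ j, d * π j := by rw [Finset.mul_sum]
      _ = _ := Finset.sum_congr rfl fun j _ => hcr j
  have hG01 : ∀ j, 0 ≤ (Gmat P j).det ∧ (Gmat P j).det ≤ 1 := det_Gmat_bounds hnn hrow
  have hdne : d ≠ 0 := det_Amat_ne_zero hnn hrow huni r₀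
  have hdge : 0 ≤ d := by
    rw [hdsum]
    exact Finset.sum_nonneg fun j _ => (hG01 j).1
  have hd0 : 0 < d := lt_of_le_of_ne hdge (Ne.symm hdne)
  have hdlen : d ≤ n := by
    rw [hdsum]
    calc ∑ j, (Gmat P j).det ≤ ∑ _j : Fin n, (1 : ℝ) :=
          Finset.sum_le_sum fun j _ => (hG01 j).2
      _ = n := by simp
  have hLint : ∀ j k : Fin n,
      ∃ zz : ℤ, (M : ℝ) * ((1 : Matrix (Fin n) (Fin n) ℝ) - P) j k = (zz : ℝ) := by
    intro j k
    obtain ⟨z, hz⟩ := hrat j k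
    by_cases hjk : j = k
    · refine ⟨M - z, ?_⟩
      rw [Matrix.sub_apply, Matrix.one_apply, if_pos hjk]
      push_cast
      linarith
    · refine ⟨-z, ?_⟩
      rw [Matrix.sub_apply, Matrix.one_apply, if_neg hjk]
      push_cast
      linarith
  obtain ⟨z, hz⟩ := int_det M (Amat P r₀) r₀
    (fun j => ⟨1, by simp [Amat]⟩)
    (fun k hk j => by
      simp only [Amat, Matrix.of_apply, if_neg hk]
      exact hLint j k)
  obtain ⟨zi, hzi⟩ := int_det M (Gmat P i) i
    (fun j => by
      refine ⟨1, ?_⟩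
      rw [Gmat, Matrix.updateCol_apply]
      by_cases h : j = i
      · rw [if_pos h]; simp
      · rw [if_neg h]; simp [Amat])
    (fun k hk j => by
      rw [Gmat, Matrix.updateCol_apply]
      by_cases h : j = i
      · rw [if_pos h]
        exact ⟨0, by rw [Pi.single_eq_of_ne hk]; simp⟩
      · rw [if_neg h]
        simp only [Amat, Matrix.of_apply, if_neg hk]
        exact hLint j k)
  have hMpos : (0 : ℝ) < (M : ℝ) ^ (n - 1) := by
    have : (0 : ℝ) < (M : ℝ) := by
      have : (1 : ℝ) ≤ (M : ℝ) := by exact_mod_cast hM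
      linarith
    positivity
  have hzpos : (0 : ℤ) < z := by
    have : (0 : ℝ) < (z : ℝ) := by rw [← hz]; exact mul_pos hMpos hd0
    exact_mod_cast this
  have hzle : z ≤ (n : ℤ) * (M : ℤ) ^ (n - 1) := by
    have h2 : (z : ℝ) ≤ (n : ℝ) * (M : ℝ) ^ (n - 1) := by
      rw [← hz]
      calc (M : ℝ) ^ (n - 1) * d ≤ (M : ℝ) ^ (n - 1) * n :=
            mul_le_mul_of_nonneg_left hdlen hMpos.le
        _ = (n : ℝ) * (M : ℝ) ^ (n - 1) := by ring
    exact_mod_cast h2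
  refine ⟨(zi : ℚ) / (z : ℚ), ?_, ?_⟩
  · have hzr : (z : ℝ) ≠ 0 := by
      have : (0 : ℝ) < (z : ℝ) := by exact_mod_cast hzpos
      linarith
    have hkey : (zi : ℝ) = (z : ℝ) * π i := by
      rw [← hz, ← hzi, ← hcr i]
      ring
    push_cast
    rw [hkey, mul_comm, mul_div_assoc, div_self hzr, mul_one]
  · have hdvd : ((((zi : ℚ) / (z : ℚ)).den : ℤ)) ∣ z := by
      have h3 := Rat.den_dvd zi z
      rwa [Rat.divInt_eq_div] at h3
    have h4 : ((((zi : ℚ) / (z : ℚ)).den : ℤ)) ≤ z := Int.le_of_dvd hzpos hdvd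
    have h5 : ((((zi : ℚ) / (z : ℚ)).den : ℤ)) ≤ (n : ℤ) * (M : ℤ) ^ (n - 1) :=
      le_trans h4 hzle
    exact_mod_cast h5
end

section
/- Let T be the Shapley operator of a finite concurrent stochastic game on state space {1,…,n} that is unichain. Then the ergodic equation is solvable: there exist v ∈ ℝ^n and λ ∈ ℝ such that T(v) = λe + v. -/
/-- The Shapley operator of a finite concurrent stochastic game with state space
`Fin n`, action sets `A i`, `B i`, payments `r` and transition probabilities `P`:
`T_i(v) = min_α max_β Σ_{a,b} α(a)β(b) (r_i^{ab} + Σ_j P_{ij}^{ab} v_j)`,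
where `α`, `β` range over probability vectors on `A i` and `B i`. -/
noncomputable def shapleyOperator {n : ℕ} (A B : Fin n → Type)
    [∀ i, Fintype (A i)] [∀ i, Fintype (B i)]
    (r : ∀ i, A i → B i → ℝ) (P : ∀ i, A i → B i → Fin n → ℝ)
    (v : Fin n → ℝ) : Fin n → ℝ :=
  fun i => ⨅ α : stdSimplex ℝ (A i), ⨆ β : stdSimplex ℝ (B i),
    ∑ a : A i, ∑ b : B i, α.1 a * β.1 b * (r i a b + ∑ j, P i a b j * v j)

namespace ErgodicProof

attribute [local instance] Classical.decEq

set_option linter.unusedSectionVars false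

variable {X Y : Type} [Fintype X] [Fintype Y] [Nonempty X] [Nonempty Y]

/-- bilinear payoff -/
def pay (G : X → Y → ℝ) (α : X → ℝ) (β : Y → ℝ) : ℝ := ∑ a, ∑ b, α a * β b * G a b

noncomputable instance : Nonempty (stdSimplex ℝ X) :=
  ⟨⟨Pi.single (Classical.arbitrary X) 1, single_mem_stdSimplex ℝ _⟩⟩

lemma pay_eq (G : X → Y → ℝ) (α : X → ℝ) (β : Y → ℝ) :
    pay G α β = ∑ b, β b * ∑ a, α a * G a b := by
  rw [pay, Finset.sum_comm]
  refine Finset.sum_congr rfl fun b _ => ?_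
  rw [Finset.mul_sum]
  exact Finset.sum_congr rfl fun a _ => by ring

/-- best response value of player 2 against mixed α -/
noncomputable def bestResp (G : X → Y → ℝ) (α : X → ℝ) : ℝ :=
  Finset.univ.sup' Finset.univ_nonempty (fun b => ∑ a, α a * G a b)

lemma le_bestResp (G : X → Y → ℝ) (α : X → ℝ) (b : Y) :
    (∑ a, α a * G a b) ≤ bestResp G α :=
  Finset.le_sup' (fun b => ∑ a, α a * G a b) (Finset.mem_univ b)

lemma pay_le_bestResp (G : X → Y → ℝ) {α : X → ℝ} {β : Y → ℝ}
    (hβ : β ∈ stdSimplex ℝ Y) : pay G α β ≤ bestResp G α := by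
  rw [pay_eq]
  calc ∑ b, β b * ∑ a, α a * G a b ≤ ∑ b : Y, β b * bestResp G α := by
        apply Finset.sum_le_sum
        intro b _
        exact mul_le_mul_of_nonneg_left (le_bestResp G α b) (hβ.1 b)
    _ = bestResp G α := by rw [← Finset.sum_mul, hβ.2, one_mul]

lemma pay_pure_right (G : X → Y → ℝ) (α : X → ℝ) (b0 : Y) :
    pay G α (Pi.single b0 1) = ∑ a, α a * G a b0 := by
  rw [pay_eq, Finset.sum_eq_single b0]
  · rw [Pi.single_eq_same, one_mul]
  · intro b _ hb; rw [Pi.single_eq_of_ne hb, zero_mul]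
  · intro h; exact absurd (Finset.mem_univ b0) h

lemma pay_pure_left (G : X → Y → ℝ) (a0 : X) (β : Y → ℝ) :
    pay G (Pi.single a0 1) β = ∑ b, β b * G a0 b := by
  rw [pay_eq]
  refine Finset.sum_congr rfl fun b _ => ?_
  congr 1
  rw [Finset.sum_eq_single a0]
  · rw [Pi.single_eq_same, one_mul]
  · intro a _ ha; rw [Pi.single_eq_of_ne ha, zero_mul]
  · intro h; exact absurd (Finset.mem_univ a0) h

/-- sup over simplex equals best response (pure max) -/
lemma isGreatest_pay (G : X → Y → ℝ) (α : X → ℝ) :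
    IsGreatest (Set.range fun β : stdSimplex ℝ Y => pay G α β.1) (bestResp G α) := by
  constructor
  · obtain ⟨b0, _, hb0⟩ := Finset.exists_mem_eq_sup' Finset.univ_nonempty
      (fun b => ∑ a, α a * G a b)
    refine ⟨⟨Pi.single b0 1, single_mem_stdSimplex ℝ _⟩, ?_⟩
    show pay G α (Pi.single b0 1) = _
    rw [pay_pure_right, bestResp, hb0]
  · rintro x ⟨β, rfl⟩
    exact pay_le_bestResp G β.2

lemma iSup_pay (G : X → Y → ℝ) (α : X → ℝ) :
    (⨆ β : stdSimplex ℝ Y, pay G α β.1) = bestResp G α :=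
  (isGreatest_pay G α).csSup_eq

/-- value of the matrix game, lower (min-max) version -/
noncomputable def matVal (G : X → Y → ℝ) : ℝ :=
  ⨅ α : stdSimplex ℝ X, ⨆ β : stdSimplex ℝ Y, pay G α.1 β.1

lemma bestResp_continuous (G : X → Y → ℝ) : Continuous (bestResp G) := by
  apply Continuous.finset_sup'_apply
  intro b _
  exact continuous_finset_sum _ fun a _ => (continuous_apply a).mul continuous_const

lemma exists_optimal (G : X → Y → ℝ) :
    ∃ α ∈ stdSimplex ℝ X, matVal G = bestResp G α ∧
      ∀ α' ∈ stdSimplex ℝ X, bestResp G α ≤ bestResp G α' := by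
  obtain ⟨α, hα, hmin⟩ := (isCompact_stdSimplex ℝ X).exists_isMinOn
    ⟨_, single_mem_stdSimplex ℝ (Classical.arbitrary X)⟩
    (bestResp_continuous G).continuousOn
  refine ⟨α, hα, ?_, fun α' hα' => hmin hα'⟩
  rw [matVal]
  simp_rw [iSup_pay]
  exact IsLeast.csInf_eq (s := Set.range fun α : stdSimplex ℝ X => bestResp G α.1)
    ⟨⟨⟨α, hα⟩, rfl⟩, by rintro x ⟨α', rfl⟩; exact hmin α'.2⟩

lemma matVal_le_bestResp (G : X → Y → ℝ) {α : X → ℝ} (hα : α ∈ stdSimplex ℝ X) :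
    matVal G ≤ bestResp G α := by
  obtain ⟨α0, h1, h2, h3⟩ := exists_optimal G
  rw [h2]; exact h3 α hα

/-- master comparison lemma -/
lemma matVal_le_add {G G' : X → Y → ℝ} {D : ℝ} (h : ∀ a b, G a b ≤ G' a b + D) :
    matVal G ≤ matVal G' + D := by
  obtain ⟨α, hα, h2, _⟩ := exists_optimal G'
  rw [h2]
  refine le_trans (matVal_le_bestResp G hα) ?_
  rw [bestResp, Finset.sup'_le_iff]
  intro b _
  calc ∑ a, α a * G a b ≤ ∑ a, α a * (G' a b + D) := by
        apply Finset.sum_le_sum; intro a _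
        exact mul_le_mul_of_nonneg_left (h a b) (hα.1 a)
    _ = (∑ a, α a * G' a b) + D := by
        simp only [mul_add, Finset.sum_add_distrib, ← Finset.sum_mul, hα.2, one_mul]
    _ ≤ _ := by linarith [le_bestResp G' α b]

lemma abs_matVal_sub {G G' : X → Y → ℝ} {D : ℝ} (h : ∀ a b, |G a b - G' a b| ≤ D) :
    |matVal G - matVal G'| ≤ D := by
  rw [abs_sub_le_iff]
  constructor
  · have := matVal_le_add (G := G) (G' := G') (D := D)
      (fun a b => by have := (abs_sub_le_iff.mp (h a b)).1; linarith)
    linarith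
  · have := matVal_le_add (G := G') (G' := G) (D := D)
      (fun a b => by have := (abs_sub_le_iff.mp (h a b)).2; linarith)
    linarith

lemma matVal_smul {G : X → Y → ℝ} {s : ℝ} (hs : 0 ≤ s) :
    matVal (fun a b => s * G a b) = s * matVal G := by
  rw [matVal, matVal, Real.mul_iInf_of_nonneg hs]
  refine iInf_congr fun α => ?_
  rw [Real.mul_iSup_of_nonneg hs]
  refine iSup_congr fun β => ?_
  rw [pay, pay, Finset.mul_sum]
  refine Finset.sum_congr rfl fun a _ => ?_
  rw [Finset.mul_sum]
  exact Finset.sum_congr rfl fun b _ => by ring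

lemma matVal_zero : matVal (fun (_ : X) (_ : Y) => (0:ℝ)) = 0 := by
  have := matVal_smul (G := fun (_:X) (_:Y) => (0:ℝ)) (s := 0) le_rfl
  simpa using this

lemma abs_matVal_le {G : X → Y → ℝ} {c : ℝ} (h : ∀ a b, |G a b| ≤ c) : |matVal G| ≤ c := by
  have := abs_matVal_sub (G := G) (G' := fun _ _ => (0:ℝ)) (D := c)
    (fun a b => by simpa using h a b)
  rwa [matVal_zero, sub_zero] at this

end ErgodicProof
section PartTwo
namespace ErgodicProof

lemma reaches_mem_of_closed {n : ℕ} {M : Matrix (Fin n) (Fin n) ℝ} {S : Set (Fin n)}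
    (hclosed : ∀ i ∈ S, ∀ j, 0 < M i j → j ∈ S) {i j : Fin n} (hi : i ∈ S)
    (h : Reaches M i j) : j ∈ S := by
  induction h with
  | refl => exact hi
  | tail _ hbc ih => exact hclosed _ ih _ hbc

lemma exists_finalClass_subset {n : ℕ} (M : Matrix (Fin n) (Fin n) ℝ) (S : Set (Fin n))
    (hne : S.Nonempty) (hclosed : ∀ i ∈ S, ∀ j, 0 < M i j → j ∈ S) :
    ∃ C, IsFinalClass M C ∧ C ⊆ S := by
  classical
  obtain ⟨i0, hi0⟩ := hne
  set F : Finset (Fin n) := Finset.univ.filter (fun j => Reaches M i0 j) with hF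
  have hi0F : i0 ∈ F :=
    Finset.mem_filter.mpr ⟨Finset.mem_univ _, Relation.ReflTransGen.refl⟩
  obtain ⟨js, hjs, hmin⟩ := F.exists_min_image
    (fun j => (Finset.univ.filter (fun k => Reaches M j k)).card) ⟨i0, hi0F⟩
  have hreach_i0_js : Reaches M i0 js := by simpa [hF] using hjs
  refine ⟨{j | Reaches M js j}, ⟨⟨js, Relation.ReflTransGen.refl⟩, ?_, ?_⟩, ?_⟩
  · -- strongly connected
    intro k hk l hl
    have hkF : k ∈ F := by
      simp only [hF, Finset.mem_filter, Finset.mem_univ, true_and]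
      exact hreach_i0_js.trans hk
    have hsub : (Finset.univ.filter (fun x => Reaches M k x)) ⊆
        (Finset.univ.filter (fun x => Reaches M js x)) := by
      intro x hx
      simp only [Finset.mem_filter, Finset.mem_univ, true_and] at hx ⊢
      exact hk.trans hx
    have heq := Finset.eq_of_subset_of_card_le hsub (hmin k hkF)
    have : l ∈ Finset.univ.filter (fun x => Reaches M k x) := by
      rw [heq]; simp only [Finset.mem_filter, Finset.mem_univ, true_and]; exact hl
    simpa using this
  · -- closed
    intro i hi j hj
    exact Relation.ReflTransGen.tail hi hj
  · -- contained in S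
    intro j hj
    exact reaches_mem_of_closed hclosed hi0 (hreach_i0_js.trans hj)

lemma avg_le {n : ℕ} {p w : Fin n → ℝ} {c : ℝ} (hp0 : ∀ j, 0 ≤ p j)
    (hp1 : ∑ j, p j = 1) (hle : ∀ j, w j ≤ c) : ∑ j, p j * w j ≤ c := by
  calc ∑ j, p j * w j ≤ ∑ j, p j * c :=
        Finset.sum_le_sum fun j _ => mul_le_mul_of_nonneg_left (hle j) (hp0 j)
    _ = c := by rw [← Finset.sum_mul, hp1, one_mul]

lemma le_avg {n : ℕ} {p w : Fin n → ℝ} {c : ℝ} (hp0 : ∀ j, 0 ≤ p j)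
    (hp1 : ∑ j, p j = 1) (hle : ∀ j, c ≤ w j) : c ≤ ∑ j, p j * w j := by
  have := avg_le (w := fun j => -w j) (c := -c) hp0 hp1 (fun j => by simpa using hle j)
  simp only [mul_neg, Finset.sum_neg_distrib] at this
  linarith

lemma support_eq_of_avg_eq_max {n : ℕ} {p w : Fin n → ℝ} {c : ℝ} (hp0 : ∀ j, 0 ≤ p j)
    (hp1 : ∑ j, p j = 1) (hle : ∀ j, w j ≤ c) (heq : ∑ j, p j * w j = c) :
    ∀ j, 0 < p j → w j = c := by
  have hz : ∑ j, p j * (c - w j) = 0 := by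
    simp only [mul_sub, Finset.sum_sub_distrib, ← Finset.sum_mul, hp1, one_mul, heq, sub_self]
  have := (Finset.sum_eq_zero_iff_of_nonneg (fun j _ =>
    mul_nonneg (hp0 j) (by linarith [hle j]))).mp hz
  intro j hj
  have hzj := this j (Finset.mem_univ j)
  rcases mul_eq_zero.mp hzj with h | h
  · exact absurd h (ne_of_gt hj)
  · linarith

lemma support_eq_of_avg_eq_min {n : ℕ} {p w : Fin n → ℝ} {c : ℝ} (hp0 : ∀ j, 0 ≤ p j)
    (hp1 : ∑ j, p j = 1) (hle : ∀ j, c ≤ w j) (heq : ∑ j, p j * w j = c) :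
    ∀ j, 0 < p j → w j = c := by
  intro j hj
  have := support_eq_of_avg_eq_max (w := fun j => -w j) (c := -c) hp0 hp1
    (fun j => by simpa using hle j)
    (by simp only [mul_neg, Finset.sum_neg_distrib, heq]) j hj
  have h' : -w j = -c := this
  linarith

lemma bestResp_pure {X Y : Type} [Fintype X] [Fintype Y] [Nonempty X] [Nonempty Y]
    [DecidableEq X] (G : X → Y → ℝ) (a0 : X) :
    bestResp G (Pi.single a0 1) = Finset.univ.sup' Finset.univ_nonempty (fun b => G a0 b) := by
  rw [bestResp]
  congr 1
  ext b
  rw [Finset.sum_eq_single a0]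
  · rw [Pi.single_eq_same, one_mul]
  · intro a _ ha; rw [Pi.single_eq_of_ne ha, zero_mul]
  · intro h; exact absurd (Finset.mem_univ a0) h

lemma simplex_exists_pos {X : Type} [Fintype X] {α : X → ℝ} (hα : α ∈ stdSimplex ℝ X) :
    ∃ a, 0 < α a := by
  by_contra h
  push_neg at h
  have : ∑ a, α a = 0 := Finset.sum_eq_zero fun a _ => le_antisymm (h a) (hα.1 a)
  rw [hα.2] at this
  norm_num at this

/-- The key combinatorial lemma: a fixed point of the reward-free Shapley operator
of a unichain game is constant. -/
lemma drift_fixed_constant {n : ℕ} (hn : 0 < n) (A B : Fin n → Type)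
    [∀ i, Fintype (A i)] [∀ i, Fintype (B i)]
    [∀ i, Nonempty (A i)] [∀ i, Nonempty (B i)]
    (P : ∀ i, A i → B i → Fin n → ℝ)
    (hP0 : ∀ i a b j, 0 ≤ P i a b j) (hP1 : ∀ i a b, ∑ j, P i a b j = 1)
    (huni : ∀ (σ : ∀ i, A i) (τ : ∀ i, B i),
      Unichain (Matrix.of fun i j => P i (σ i) (τ i) j))
    (w : Fin n → ℝ)
    (hw : ∀ i, matVal (fun a b => ∑ j, P i a b j * w j) = w i)
    (i0 i1 : Fin n) (hmin : ∀ j, w i0 ≤ w j) (hmax : ∀ j, w j ≤ w i1) :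
    w i1 = w i0 := by
  classical
  by_contra hne
  set G : ∀ i, A i → B i → ℝ := fun i a b => ∑ j, P i a b j * w j with hG
  -- step 1 : at a maximum state, for every a there is b keeping us in the max set
  have step1 : ∀ i, w i = w i1 → ∀ a : A i, ∃ b : B i,
      ∀ j, 0 < P i a b j → w j = w i1 := by
    intro i hi a
    have h1 : w i1 ≤ bestResp (G i) (Pi.single a 1) := by
      rw [← hi, ← hw i]
      exact matVal_le_bestResp _ (single_mem_stdSimplex ℝ a)
    rw [bestResp_pure] at h1
    obtain ⟨b, _, hb⟩ := Finset.exists_mem_eq_sup' Finset.univ_nonempty (fun b => G i a b)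
    rw [hb] at h1
    have h2 : G i a b ≤ w i1 := avg_le (hP0 i a b) (hP1 i a b) hmax
    exact ⟨b, fun j hj => support_eq_of_avg_eq_max (hP0 i a b) (hP1 i a b) hmax
      (le_antisymm h2 h1) j hj⟩
  -- step 2 : at a minimum state, there is a keeping us in the min set against every b
  have step2 : ∀ i, w i = w i0 → ∃ a : A i, ∀ b : B i,
      ∀ j, 0 < P i a b j → w j = w i0 := by
    intro i hi
    obtain ⟨α, hα, hval, _⟩ := exists_optimal (G i)
    have hsum : ∀ b : B i, ∀ a : A i, 0 < α a → G i a b = w i0 := by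
      intro b
      have hub : (∑ a, α a * G i a b) ≤ w i0 := by
        rw [← hi, ← hw i, hval]
        exact le_bestResp (G i) α b
      have hlb : ∀ a : A i, w i0 ≤ G i a b :=
        fun a => le_avg (hP0 i a b) (hP1 i a b) hmin
      have heq : (∑ a, α a * G i a b) = w i0 := by
        refine le_antisymm hub ?_
        calc w i0 = ∑ a, α a * w i0 := by rw [← Finset.sum_mul, hα.2, one_mul]
          _ ≤ ∑ a, α a * G i a b :=
              Finset.sum_le_sum fun a _ => mul_le_mul_of_nonneg_left (hlb a) (hα.1 a)
      intro a ha
      exact le_antisymm (by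
        by_contra hgt
        push_neg at hgt
        have : (∑ a', α a' * G i a' b) > w i0 := by
          calc w i0 = ∑ a', α a' * w i0 := by rw [← Finset.sum_mul, hα.2, one_mul]
            _ < ∑ a', α a' * G i a' b := by
                apply Finset.sum_lt_sum
                · exact fun a' _ => mul_le_mul_of_nonneg_left (hlb a') (hα.1 a')
                · exact ⟨a, Finset.mem_univ a, by nlinarith [hlb a]⟩
        linarith) (hlb a)
    obtain ⟨a, ha⟩ := simplex_exists_pos hα
    refine ⟨a, fun b j hj => ?_⟩
    exact support_eq_of_avg_eq_min (hP0 i a b) (hP1 i a b) hmin (hsum b a ha) j hj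
  -- build the pure policies
  set σ : ∀ i, A i := fun i =>
    if h : w i = w i0 then Classical.choose (step2 i h) else Classical.arbitrary _ with hσ
  set τ : ∀ i, B i := fun i =>
    if h : w i = w i1 ∧ ¬ w i = w i0 then Classical.choose (step1 i h.1 (σ i))
    else Classical.arbitrary _ with hτ
  set M : Matrix (Fin n) (Fin n) ℝ := Matrix.of fun i j => P i (σ i) (τ i) j with hM
  have hEclosed : ∀ i ∈ {j | w j = w i0}, ∀ j, 0 < M i j → j ∈ {j | w j = w i0} := by
    intro i hi j hj
    simp only [Set.mem_setOf_eq] at hi ⊢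
    have hσi : σ i = Classical.choose (step2 i hi) := by
      show (if h : w i = w i0 then _ else _) = _
      rw [dif_pos hi]
    have := Classical.choose_spec (step2 i hi) (τ i) j
    rw [← hσi] at this
    exact this hj
  have hDclosed : ∀ i ∈ {j | w j = w i1}, ∀ j, 0 < M i j → j ∈ {j | w j = w i1} := by
    intro i hi j hj
    simp only [Set.mem_setOf_eq] at hi ⊢
    have hiE : ¬ w i = w i0 := by rw [hi]; exact hne
    have hτi : τ i = Classical.choose (step1 i hi (σ i)) := by
      show (if h : w i = w i1 ∧ ¬ w i = w i0 then _ else _) = _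
      rw [dif_pos ⟨hi, hiE⟩]
    have := Classical.choose_spec (step1 i hi (σ i)) j
    rw [← hτi] at this
    exact this hj
  obtain ⟨CE, hCE, hCEsub⟩ := exists_finalClass_subset M {j | w j = w i0} ⟨i0, rfl⟩ hEclosed
  obtain ⟨CD, hCD, hCDsub⟩ := exists_finalClass_subset M {j | w j = w i1} ⟨i1, rfl⟩ hDclosed
  obtain ⟨C, _, hCuniq⟩ := huni σ τ
  have h1 : CE = C := hCuniq _ hCE
  have h2 : CD = C := hCuniq _ hCD
  obtain ⟨x, hx⟩ := hCE.1
  have hxE : w x = w i0 := hCEsub hx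
  have hxD : w x = w i1 := hCDsub (by rw [h2, ← h1]; exact hx)
  exact hne (by rw [← hxD, hxE])

end ErgodicProof
end PartTwo
namespace ErgodicProof

section Operator

variable {n : ℕ} {A B : Fin n → Type} [∀ i, Fintype (A i)] [∀ i, Fintype (B i)]
  [∀ i, Nonempty (A i)] [∀ i, Nonempty (B i)]

/-- parametrized Shapley-type operator: reward scale ρ, discount β -/
noncomputable def op (r : ∀ i, A i → B i → ℝ) (P : ∀ i, A i → B i → Fin n → ℝ)
    (ρ β : ℝ) (v : Fin n → ℝ) : Fin n → ℝ :=
  fun i => matVal (fun a b => ρ * r i a b + β * ∑ j, P i a b j * v j)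

variable {r : ∀ i, A i → B i → ℝ} {P : ∀ i, A i → B i → Fin n → ℝ}

lemma abs_avg_le {p w : Fin n → ℝ} {C : ℝ} (hp0 : ∀ j, 0 ≤ p j)
    (hp1 : ∑ j, p j = 1) (h : ∀ j, |w j| ≤ C) : |∑ j, p j * w j| ≤ C := by
  rw [abs_le]
  constructor
  · exact le_avg hp0 hp1 fun j => neg_le_of_abs_le (h j)
  · exact avg_le hp0 hp1 fun j => le_of_abs_le (h j)

/-- master estimate for the parametrized operator -/
lemma op_est (hP0 : ∀ i a b j, 0 ≤ P i a b j) (hP1 : ∀ i a b, ∑ j, P i a b j = 1)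
    {R : ℝ} (hR : ∀ i a b, |r i a b| ≤ R)
    {ρ ρ' β β' : ℝ} {v v' : Fin n → ℝ} {C d : ℝ}
    (hv : ∀ j, |v j| ≤ C) (hd : ∀ j, |v j - v' j| ≤ d) (i : Fin n) :
    |op r P ρ β v i - op r P ρ' β' v' i| ≤ |ρ - ρ'| * R + |β - β'| * C + |β'| * d := by
  apply abs_matVal_sub
  intro a b
  have key : (ρ * r i a b + β * ∑ j, P i a b j * v j)
      - (ρ' * r i a b + β' * ∑ j, P i a b j * v' j)
      = (ρ - ρ') * r i a b + (β - β') * (∑ j, P i a b j * v j)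
        + β' * (∑ j, P i a b j * (v j - v' j)) := by
    have hsplit : ∑ j, P i a b j * (v j - v' j)
        = (∑ j, P i a b j * v j) - ∑ j, P i a b j * v' j := by
      rw [← Finset.sum_sub_distrib]
      exact Finset.sum_congr rfl fun j _ => by ring
    rw [hsplit]; ring
  rw [key]
  have h1 : |(ρ - ρ') * r i a b| ≤ |ρ - ρ'| * R := by
    rw [abs_mul]
    exact mul_le_mul_of_nonneg_left (hR i a b) (abs_nonneg _)
  have h2 : |(β - β') * ∑ j, P i a b j * v j| ≤ |β - β'| * C := by
    rw [abs_mul]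
    exact mul_le_mul_of_nonneg_left (abs_avg_le (hP0 i a b) (hP1 i a b) hv) (abs_nonneg _)
  have h3 : |β' * ∑ j, P i a b j * (v j - v' j)| ≤ |β'| * d := by
    rw [abs_mul]
    exact mul_le_mul_of_nonneg_left (abs_avg_le (hP0 i a b) (hP1 i a b) hd) (abs_nonneg _)
  calc |(ρ - ρ') * r i a b + (β - β') * (∑ j, P i a b j * v j)
        + β' * (∑ j, P i a b j * (v j - v' j))| ≤ _ := (abs_add_le _ _).trans
          (add_le_add (abs_add_le _ _) le_rfl)
    _ ≤ |ρ - ρ'| * R + |β - β'| * C + |β'| * d := by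
        exact add_le_add (add_le_add h1 h2) h3

lemma matVal_add_const {X Y : Type} [Fintype X] [Fintype Y] [Nonempty X] [Nonempty Y]
    {G : X → Y → ℝ} {c : ℝ} : matVal (fun a b => G a b + c) = matVal G + c := by
  apply le_antisymm
  · exact matVal_le_add fun a b => le_rfl
  · have := matVal_le_add (G := G) (G' := fun a b => G a b + c) (D := -c)
      (fun a b => by show G a b ≤ G a b + c + -c; linarith)
    linarith

lemma op_shift (hP1 : ∀ i a b, ∑ j, P i a b j = 1) (ρ β c : ℝ) (v : Fin n → ℝ) (i : Fin n) :
    op r P ρ β (fun j => v j + c) i = op r P ρ β v i + β * c := by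
  rw [op, op]
  have : (fun (a : A i) (b : B i) => ρ * r i a b + β * ∑ j, P i a b j * (v j + c))
      = fun a b => (ρ * r i a b + β * ∑ j, P i a b j * v j) + β * c := by
    funext a b
    have : ∑ j, P i a b j * (v j + c) = (∑ j, P i a b j * v j) + c := by
      simp only [mul_add, Finset.sum_add_distrib, ← Finset.sum_mul, hP1 i a b, one_mul]
    rw [this]; ring
  rw [this, matVal_add_const]

lemma op_scale {s : ℝ} (hs : 0 < s) (ρ β : ℝ) (v : Fin n → ℝ) (i : Fin n) :
    op r P (ρ / s) β (fun j => v j / s) i = op r P ρ β v i / s := by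
  rw [op, op]
  have : (fun (a : A i) (b : B i) => ρ / s * r i a b + β * ∑ j, P i a b j * (v j / s))
      = fun a b => s⁻¹ * (ρ * r i a b + β * ∑ j, P i a b j * v j) := by
    funext a b
    have : ∑ j, P i a b j * (v j / s) = (∑ j, P i a b j * v j) * s⁻¹ := by
      rw [Finset.sum_mul]
      exact Finset.sum_congr rfl fun j _ => by field_simp
    rw [this]; field_simp
  rw [this, matVal_smul (le_of_lt (inv_pos.mpr hs))]
  field_simp

lemma op_zero_bound (hP0 : ∀ i a b j, 0 ≤ P i a b j) (hP1 : ∀ i a b, ∑ j, P i a b j = 1)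
    {R : ℝ} (hR : ∀ i a b, |r i a b| ≤ R) (β : ℝ) (i : Fin n) :
    |op r P 1 β (fun _ => 0) i| ≤ R := by
  rw [op]
  apply abs_matVal_le
  intro a b
  simp only [mul_zero, Finset.sum_const_zero, one_mul, add_zero]
  exact hR i a b

lemma exists_fixedPoint (hn : 0 < n)
    (hP0 : ∀ i a b j, 0 ≤ P i a b j) (hP1 : ∀ i a b, ∑ j, P i a b j = 1)
    {R : ℝ} (hR : ∀ i a b, |r i a b| ≤ R)
    {β : ℝ} (hβ0 : 0 ≤ β) (hβ1 : β < 1) :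
    ∃ v : Fin n → ℝ, ∀ i, op r P 1 β v i = v i := by
  have hlip : LipschitzWith ⟨β, hβ0⟩ (op r P 1 β) := by
    apply LipschitzWith.of_dist_le_mul
    intro v w
    have : Nonempty (Fin n) := ⟨⟨0, hn⟩⟩
    obtain ⟨C, hC⟩ : ∃ C, ∀ j, |v j| ≤ C :=
      ⟨Finset.univ.sup' Finset.univ_nonempty (fun j => |v j|),
        fun j => Finset.le_sup' (fun j => |v j|) (Finset.mem_univ j)⟩
    have h0 : (0:ℝ) ≤ β * dist v w := mul_nonneg hβ0 dist_nonneg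
    show dist (op r P 1 β v) (op r P 1 β w) ≤ β * dist v w
    rw [dist_pi_le_iff h0]
    intro i
    rw [Real.dist_eq]
    have := op_est hP0 hP1 hR (ρ := 1) (ρ' := 1) (β := β) (β' := β)
      (v := v) (v' := w) (C := C) (d := dist v w)
      hC
      (fun j => by
        have := dist_le_pi_dist v w j
        rwa [Real.dist_eq] at this) i
    simp only [sub_self, abs_zero, zero_mul, zero_add, abs_of_nonneg hβ0] at this
    exact this
  have hcontr : ContractingWith ⟨β, hβ0⟩ (op r P 1 β) := ⟨by exact_mod_cast hβ1, hlip⟩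
  refine ⟨hcontr.fixedPoint (op r P 1 β), fun i => ?_⟩
  have := hcontr.fixedPoint_isFixedPt
  exact congrFun this i

end Operator

end ErgodicProof
namespace ErgodicProof

open Filter Topology

section Limits

variable {n : ℕ} {A B : Fin n → Type} [∀ i, Fintype (A i)] [∀ i, Fintype (B i)]
  [∀ i, Nonempty (A i)] [∀ i, Nonempty (B i)]
  {r : ∀ i, A i → B i → ℝ} {P : ∀ i, A i → B i → Fin n → ℝ}

/-- passing to the limit in approximate fixed-point equations -/
lemma op_limit (hP0 : ∀ i a b j, 0 ≤ P i a b j) (hP1 : ∀ i a b, ∑ j, P i a b j = 1)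
    {R : ℝ} (hR : ∀ i a b, |r i a b| ≤ R)
    {ρs βs ds : ℕ → ℝ} {ρ0 β0 d0 C : ℝ} {ws : ℕ → Fin n → ℝ} {w : Fin n → ℝ}
    (hρ : Tendsto ρs atTop (𝓝 ρ0)) (hβ : Tendsto βs atTop (𝓝 β0))
    (hw : Tendsto ws atTop (𝓝 w)) (hd : Tendsto ds atTop (𝓝 d0))
    (hC : ∀ k j, |ws k j| ≤ C)
    (heq : ∀ k i, op r P (ρs k) (βs k) (ws k) i = ws k i + ds k) :
    ∀ i, op r P ρ0 β0 w i = w i + d0 := by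
  intro i
  have h1 : Tendsto (fun k => ws k i + ds k) atTop (𝓝 (w i + d0)) :=
    ((tendsto_pi_nhds.mp hw) i).add hd
  have hdistw : Tendsto (fun k => dist (ws k) w) atTop (𝓝 0) :=
    tendsto_iff_dist_tendsto_zero.mp hw
  have h2 : Tendsto (fun k => op r P (ρs k) (βs k) (ws k) i) atTop
      (𝓝 (op r P ρ0 β0 w i)) := by
    rw [tendsto_iff_dist_tendsto_zero]
    have hbound : ∀ k, dist (op r P (ρs k) (βs k) (ws k) i) (op r P ρ0 β0 w i)
        ≤ |ρs k - ρ0| * R + |βs k - β0| * C + |β0| * dist (ws k) w := by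
      intro k
      rw [Real.dist_eq]
      exact op_est hP0 hP1 hR (hC k)
        (fun j => by
          have := dist_le_pi_dist (ws k) w j
          rwa [Real.dist_eq] at this) i
    have hb : Tendsto (fun k => |ρs k - ρ0| * R + |βs k - β0| * C + |β0| * dist (ws k) w)
        atTop (𝓝 (|ρ0 - ρ0| * R + |β0 - β0| * C + |β0| * 0)) :=
      ((((hρ.sub_const ρ0).abs.mul_const R).add
        (((hβ.sub_const β0).abs.mul_const C))).add (hdistw.const_mul |β0|))
    simp only [sub_self, abs_zero, zero_mul, zero_add, add_zero, mul_zero] at hb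
    exact squeeze_zero (fun k => dist_nonneg) hbound hb
  have h2' : Tendsto (fun k => ws k i + ds k) atTop (𝓝 (op r P ρ0 β0 w i)) := by
    refine h2.congr fun k => heq k i
  exact tendsto_nhds_unique h2' h1

end Limits

section InfSup

variable {n : ℕ} [Nonempty (Fin n)]

lemma inf'_le_inf'_add (f g : Fin n → ℝ) :
    Finset.univ.inf' Finset.univ_nonempty f ≤
      Finset.univ.inf' Finset.univ_nonempty g + dist f g := by
  obtain ⟨j, _, hj⟩ := Finset.exists_mem_eq_inf' Finset.univ_nonempty g
  rw [hj]
  have h1 : Finset.univ.inf' Finset.univ_nonempty f ≤ f j :=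
    Finset.inf'_le f (Finset.mem_univ j)
  have h2 : f j - g j ≤ dist f g := by
    have := dist_le_pi_dist f g j
    rw [Real.dist_eq] at this
    exact (le_abs_self _).trans this
  linarith

lemma abs_inf'_sub (f g : Fin n → ℝ) :
    |Finset.univ.inf' Finset.univ_nonempty f - Finset.univ.inf' Finset.univ_nonempty g|
      ≤ dist f g := by
  rw [abs_sub_le_iff]
  constructor
  · linarith [inf'_le_inf'_add f g]
  · have := inf'_le_inf'_add g f
    rw [dist_comm] at this
    linarith

lemma abs_sup'_sub (f g : Fin n → ℝ) :
    |Finset.univ.sup' Finset.univ_nonempty f - Finset.univ.sup' Finset.univ_nonempty g|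
      ≤ dist f g := by
  have key : ∀ f g : Fin n → ℝ, Finset.univ.sup' Finset.univ_nonempty f ≤
      Finset.univ.sup' Finset.univ_nonempty g + dist f g := by
    intro f g
    rw [Finset.sup'_le_iff]
    intro j _
    have h1 : g j ≤ Finset.univ.sup' Finset.univ_nonempty g :=
      Finset.le_sup' g (Finset.mem_univ j)
    have h2 : f j - g j ≤ dist f g := by
      have := dist_le_pi_dist f g j
      rw [Real.dist_eq] at this
      exact (le_abs_self _).trans this
    linarith
  rw [abs_sub_le_iff]
  constructor
  · linarith [key f g]
  · have := key g f
    rw [dist_comm] at this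
    linarith

open Filter Topology in
lemma tendsto_inf' {ws : ℕ → Fin n → ℝ} {w : Fin n → ℝ}
    (hw : Tendsto ws atTop (𝓝 w)) :
    Tendsto (fun k => Finset.univ.inf' Finset.univ_nonempty (ws k)) atTop
      (𝓝 (Finset.univ.inf' Finset.univ_nonempty w)) := by
  rw [tendsto_iff_dist_tendsto_zero]
  refine squeeze_zero (fun k => dist_nonneg) (fun k => ?_)
    (tendsto_iff_dist_tendsto_zero.mp hw)
  rw [Real.dist_eq]
  exact abs_inf'_sub _ _

open Filter Topology in
lemma tendsto_sup' {ws : ℕ → Fin n → ℝ} {w : Fin n → ℝ}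
    (hw : Tendsto ws atTop (𝓝 w)) :
    Tendsto (fun k => Finset.univ.sup' Finset.univ_nonempty (ws k)) atTop
      (𝓝 (Finset.univ.sup' Finset.univ_nonempty w)) := by
  rw [tendsto_iff_dist_tendsto_zero]
  refine squeeze_zero (fun k => dist_nonneg) (fun k => ?_)
    (tendsto_iff_dist_tendsto_zero.mp hw)
  rw [Real.dist_eq]
  exact abs_sup'_sub _ _

end InfSup

end ErgodicProof
namespace ErgodicProof

open Filter Topology

section Main

variable {n : ℕ} {A B : Fin n → Type} [∀ i, Fintype (A i)] [∀ i, Fintype (B i)]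
  [∀ i, Nonempty (A i)] [∀ i, Nonempty (B i)]
  {r : ∀ i, A i → B i → ℝ} {P : ∀ i, A i → B i → Fin n → ℝ}

lemma shapley_eq_op (v : Fin n → ℝ) : shapleyOperator A B r P v = op r P 1 1 v := by
  funext i
  show matVal (fun a b => r i a b + ∑ j, P i a b j * v j) = _
  rw [op]
  congr 1
  funext a b
  ring

theorem main_thm (hn : 0 < n)
    (hP0 : ∀ i a b j, 0 ≤ P i a b j) (hP1 : ∀ i a b, ∑ j, P i a b j = 1)
    (huni : ∀ (σ : ∀ i, A i) (τ : ∀ i, B i),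
      Unichain (Matrix.of fun i j => P i (σ i) (τ i) j)) :
    ∃ (v : Fin n → ℝ) (lam : ℝ),
      shapleyOperator A B r P v = fun i => lam + v i := by
  classical
  haveI : Nonempty (Fin n) := ⟨⟨0, hn⟩⟩
  -- bound on rewards
  set R : ℝ := Finset.univ.sup' Finset.univ_nonempty
    (fun i => Finset.univ.sup' Finset.univ_nonempty (fun p : A i × B i => |r i p.1 p.2|))
    with hRdef
  have hR : ∀ i a b, |r i a b| ≤ R := by
    intro i a b
    refine le_trans ?_ (Finset.le_sup'
      (fun i => Finset.univ.sup' Finset.univ_nonempty (fun p : A i × B i => |r i p.1 p.2|))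
      (Finset.mem_univ i))
    exact Finset.le_sup' (fun p : A i × B i => |r i p.1 p.2|) (Finset.mem_univ (a, b))
  have hR0 : 0 ≤ R :=
    le_trans (abs_nonneg _) (hR (Classical.arbitrary _) (Classical.arbitrary _)
      (Classical.arbitrary _))
  -- the discount factors
  set βs : ℕ → ℝ := fun k => 1 - 1 / ((k : ℝ) + 1) with hβsdef
  have hkpos : ∀ k : ℕ, (0:ℝ) < (k : ℝ) + 1 := fun k => by positivity
  have hβ0 : ∀ k, 0 ≤ βs k := by
    intro k
    have : 1 / ((k : ℝ) + 1) ≤ 1 := by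
      rw [div_le_one (hkpos k)]
      linarith [Nat.cast_nonneg (α := ℝ) k]
    simp only [hβsdef]; linarith
  have hβ1 : ∀ k, βs k < 1 := by
    intro k
    have : 0 < 1 / ((k : ℝ) + 1) := by positivity
    simp only [hβsdef]; linarith
  have h1mβ : ∀ k, 0 ≤ 1 - βs k := fun k => by linarith [hβ1 k]
  have hβlim : Tendsto βs atTop (𝓝 1) := by
    rw [hβsdef]
    have h0 : Tendsto (fun k : ℕ => 1 / ((k : ℝ) + 1)) atTop (𝓝 0) :=
      tendsto_one_div_add_atTop_nhds_zero_nat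
    have hone : Tendsto (fun _ : ℕ => (1:ℝ)) atTop (𝓝 1) := tendsto_const_nhds
    have := hone.sub h0
    simpa using this
  -- fixed points
  have hfixex : ∀ k, ∃ v : Fin n → ℝ, ∀ i, op r P 1 (βs k) v i = v i :=
    fun k => exists_fixedPoint hn hP0 hP1 hR (hβ0 k) (hβ1 k)
  set v : ℕ → Fin n → ℝ := fun k => (hfixex k).choose with hvdef
  have hv : ∀ k i, op r P 1 (βs k) (v k) i = v k i := fun k => (hfixex k).choose_spec
  -- sup-norm bound
  set V : ℕ → ℝ := fun k => Finset.univ.sup' Finset.univ_nonempty (fun i => |v k i|)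
    with hVdef
  have hVk : ∀ k i, |v k i| ≤ V k := fun k i => Finset.le_sup' (fun i => |v k i|) (Finset.mem_univ i)
  have hV0 : ∀ k, 0 ≤ V k := fun k => le_trans (abs_nonneg _) (hVk k ⟨0, hn⟩)
  have hVR : ∀ k, (1 - βs k) * V k ≤ R := by
    intro k
    have hpt : ∀ i, |v k i| ≤ βs k * V k + R := by
      intro i
      have h1 : |op r P 1 (βs k) (v k) i - op r P 1 (βs k) (fun _ => 0) i|
          ≤ |(1:ℝ) - 1| * R + |βs k - βs k| * V k + |βs k| * V k :=
        op_est hP0 hP1 hR (hVk k) (fun j => by simpa using hVk k j) i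
      simp only [sub_self, abs_zero, zero_mul, zero_add] at h1
      have h2 := op_zero_bound hP0 hP1 hR (βs k) i
      have h3 := hv k i
      rw [abs_of_nonneg (hβ0 k)] at h1
      calc |v k i| = |op r P 1 (βs k) (v k) i| := by rw [h3]
        _ ≤ |op r P 1 (βs k) (v k) i - op r P 1 (βs k) (fun _ => 0) i|
            + |op r P 1 (βs k) (fun _ => 0) i| := by
              have := abs_sub_abs_le_abs_sub (op r P 1 (βs k) (v k) i)
                (op r P 1 (βs k) (fun _ => 0) i)
              have := abs_add_le (op r P 1 (βs k) (v k) i - op r P 1 (βs k) (fun _ => 0) i)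
                (op r P 1 (βs k) (fun _ => 0) i)
              simpa using this
        _ ≤ βs k * V k + R := add_le_add h1 h2
    have : V k ≤ βs k * V k + R := by
      rw [hVdef]
      exact Finset.sup'_le _ _ fun i _ => hpt i
    nlinarith [this]
  -- min and relative values
  set m : ℕ → ℝ := fun k => Finset.univ.inf' Finset.univ_nonempty (v k) with hmdef
  have hm_le : ∀ k i, m k ≤ v k i := fun k i => Finset.inf'_le _ (Finset.mem_univ i)
  have hm_abs : ∀ k, |m k| ≤ V k := by
    intro k
    obtain ⟨i, _, hi⟩ := Finset.exists_mem_eq_inf' (Finset.univ_nonempty (α := Fin n)) (v k)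
    rw [hmdef]
    show |Finset.univ.inf' Finset.univ_nonempty (v k)| ≤ V k
    rw [hi]
    exact hVk k i
  set u : ℕ → Fin n → ℝ := fun k j => v k j - m k with hudef
  set c : ℕ → ℝ := fun k => (1 - βs k) * m k with hcdef
  have hu0 : ∀ k i, 0 ≤ u k i := fun k i => by
    simp only [hudef]; linarith [hm_le k i]
  have hueq : ∀ k i, op r P 1 (βs k) (u k) i = u k i + c k := by
    intro k i
    have hsh := op_shift (r := r) (P := P) hP1 1 (βs k) (-(m k)) (v k) i
    have heq1 : u k = fun j => v k j + -(m k) := by funext j; simp [hudef]; ring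
    rw [heq1, hsh]
    have := hv k i
    simp only [hcdef, hudef]
    linarith [hv k i]
  have hc_abs : ∀ k, |c k| ≤ R := by
    intro k
    rw [hcdef]
    show |(1 - βs k) * m k| ≤ R
    rw [abs_mul, abs_of_nonneg (h1mβ k)]
    calc (1 - βs k) * |m k| ≤ (1 - βs k) * V k :=
          mul_le_mul_of_nonneg_left (hm_abs k) (h1mβ k)
      _ ≤ R := hVR k
  -- the span
  set S : ℕ → ℝ := fun k => Finset.univ.sup' Finset.univ_nonempty (u k) with hSdef
  have huS : ∀ k i, u k i ≤ S k := fun k i => Finset.le_sup' _ (Finset.mem_univ i)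
  have hS0 : ∀ k, 0 ≤ S k := fun k => le_trans (hu0 k ⟨0, hn⟩) (huS k ⟨0, hn⟩)
  have huinf : ∀ k, Finset.univ.inf' Finset.univ_nonempty (u k) = 0 := by
    intro k
    obtain ⟨i, _, hi⟩ := Finset.exists_mem_eq_inf' (Finset.univ_nonempty (α := Fin n)) (v k)
    apply le_antisymm
    · have : u k i = 0 := by simp only [hudef, hmdef]; rw [← hi]; ring
      calc Finset.univ.inf' Finset.univ_nonempty (u k) ≤ u k i :=
            Finset.inf'_le _ (Finset.mem_univ i)
        _ = 0 := this
    · exact Finset.le_inf' _ _ fun i _ => hu0 k i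
  have hS2V : ∀ k, S k ≤ 2 * V k := by
    intro k
    rw [hSdef]
    apply Finset.sup'_le
    intro i _
    have h1 : v k i ≤ |v k i| := le_abs_self _
    have h2 : -(m k) ≤ |m k| := neg_le_abs _
    simp only [hudef]
    have := hVk k i; have := hm_abs k
    linarith
  -- Main claim : the spans are bounded
  have hbdd : ∃ K, ∀ k, S k ≤ K := by
    by_contra hK
    push_neg at hK
    set ψ : ℕ → ℕ := fun q => (hK (q : ℝ)).choose with hψdef
    have hψS : ∀ q : ℕ, (q : ℝ) < S (ψ q) := fun q => (hK (q : ℝ)).choose_spec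
    have hSpos : ∀ q, 0 < S (ψ q) := fun q =>
      lt_of_le_of_lt (Nat.cast_nonneg q) (hψS q)
    set w : ℕ → Fin n → ℝ := fun q i => u (ψ q) i / S (ψ q) with hwdef
    have hw01 : ∀ q i, |w q i| ≤ 1 := by
      intro q i
      rw [hwdef]
      show |u (ψ q) i / S (ψ q)| ≤ 1
      rw [abs_of_nonneg (div_nonneg (hu0 _ i) (le_of_lt (hSpos q)))]
      rw [div_le_one (hSpos q)]
      exact huS _ i
    have hweq : ∀ q i, op r P (1 / S (ψ q)) (βs (ψ q)) (w q) i
        = w q i + c (ψ q) / S (ψ q) := by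
      intro q i
      have := op_scale (r := r) (P := P) (hSpos q) 1 (βs (ψ q)) (u (ψ q)) i
      rw [hwdef]
      show op r P (1 / S (ψ q)) (βs (ψ q)) (fun j => u (ψ q) j / S (ψ q)) i = _
      rw [this, hueq (ψ q) i, add_div]
    -- parameter limits
    have hρlim : Tendsto (fun q => 1 / S (ψ q)) atTop (𝓝 0) := by
      refine squeeze_zero' (Eventually.of_forall fun q => le_of_lt (div_pos one_pos (hSpos q))) ?_
        tendsto_one_div_atTop_nhds_zero_nat
      filter_upwards [eventually_ge_atTop 1] with q hq
      apply one_div_le_one_div_of_le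
      · exact_mod_cast Nat.lt_of_lt_of_le Nat.zero_lt_one hq
      · exact le_of_lt (hψS q)
    have hdlim : Tendsto (fun q => c (ψ q) / S (ψ q)) atTop (𝓝 0) := by
      refine squeeze_zero_norm' ?_ (tendsto_const_div_atTop_nhds_zero_nat R)
      filter_upwards [eventually_ge_atTop 1] with q hq
      have hq' : (0:ℝ) < (q : ℝ) := by exact_mod_cast Nat.lt_of_lt_of_le Nat.zero_lt_one hq
      show ‖c (ψ q) / S (ψ q)‖ ≤ R / (q : ℝ)
      rw [Real.norm_eq_abs, abs_div, abs_of_pos (hSpos q)]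
      exact div_le_div₀ hR0 (hc_abs (ψ q)) hq' (le_of_lt (hψS q))
    have hβlim2 : Tendsto (fun q => βs (ψ q)) atTop (𝓝 1) := by
      apply tendsto_of_tendsto_of_tendsto_of_le_of_le'
        (g := fun q : ℕ => 1 - 2 * R / (q : ℝ)) (h := fun _ : ℕ => (1:ℝ))
      · have hone : Tendsto (fun _ : ℕ => (1:ℝ)) atTop (𝓝 1) := tendsto_const_nhds
        have := hone.sub (tendsto_const_div_atTop_nhds_zero_nat (2 * R))
        simpa using this
      · exact tendsto_const_nhds
      · filter_upwards [eventually_ge_atTop 1] with q hq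
        have hq' : (0:ℝ) < (q : ℝ) := by exact_mod_cast Nat.lt_of_lt_of_le Nat.zero_lt_one hq
        have h1 : (1 - βs (ψ q)) * (q : ℝ) ≤ (1 - βs (ψ q)) * S (ψ q) :=
          mul_le_mul_of_nonneg_left (le_of_lt (hψS q)) (h1mβ (ψ q))
        have h2 : (1 - βs (ψ q)) * S (ψ q) ≤ 2 * R := by
          calc (1 - βs (ψ q)) * S (ψ q) ≤ (1 - βs (ψ q)) * (2 * V (ψ q)) :=
                mul_le_mul_of_nonneg_left (hS2V (ψ q)) (h1mβ (ψ q))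
            _ = 2 * ((1 - βs (ψ q)) * V (ψ q)) := by ring
            _ ≤ 2 * R := by linarith [hVR (ψ q)]
        have h3 : 1 - βs (ψ q) ≤ 2 * R / (q : ℝ) := by
          rw [le_div_iff₀ hq']
          linarith
        linarith
      · exact Eventually.of_forall fun q => le_of_lt (hβ1 (ψ q))
    -- compactness
    have hmem : ∀ q, w q ∈ Metric.closedBall (0 : Fin n → ℝ) 1 := by
      intro q
      rw [Metric.mem_closedBall, dist_pi_le_iff zero_le_one]
      intro i
      rw [Real.dist_eq]
      simpa using hw01 q i
    obtain ⟨w0, _, φ, hφ, hconv⟩ :=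
      tendsto_subseq_of_bounded Metric.isBounded_closedBall hmem
    have hφat : Tendsto φ atTop atTop := hφ.tendsto_atTop
    have hlimeq : ∀ i, op r P 0 1 w0 i = w0 i + 0 :=
      op_limit hP0 hP1 hR (hρlim.comp hφat) (hβlim2.comp hφat) hconv
        (hdlim.comp hφat) (fun q j => hw01 (φ q) j) (fun q i => hweq (φ q) i)
    -- min and max of the limit
    have hinfq : ∀ q, Finset.univ.inf' Finset.univ_nonempty (w q) = 0 := by
      intro q
      apply le_antisymm
      · obtain ⟨i, _, hi⟩ := Finset.exists_mem_eq_inf'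
          (Finset.univ_nonempty (α := Fin n)) (u (ψ q))
        have hui : u (ψ q) i = 0 := by rw [← hi]; exact huinf (ψ q)
        have hwi : w q i = 0 := by rw [hwdef]; show u (ψ q) i / S (ψ q) = 0; rw [hui, zero_div]
        calc Finset.univ.inf' Finset.univ_nonempty (w q) ≤ w q i :=
              Finset.inf'_le _ (Finset.mem_univ i)
          _ = 0 := hwi
      · exact Finset.le_inf' _ _ fun i _ =>
          div_nonneg (hu0 _ i) (le_of_lt (hSpos q))
    have hsupq : ∀ q, Finset.univ.sup' Finset.univ_nonempty (w q) = 1 := by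
      intro q
      apply le_antisymm
      · exact Finset.sup'_le _ _ fun i _ => by
          have := hw01 q i; exact le_of_abs_le this
      · obtain ⟨i, _, hi⟩ := Finset.exists_mem_eq_sup'
          (Finset.univ_nonempty (α := Fin n)) (u (ψ q))
        have hwi : w q i = 1 := by
          rw [hwdef]
          show u (ψ q) i / S (ψ q) = 1
          have : u (ψ q) i = S (ψ q) := by rw [← hi]
          rw [this, div_self (ne_of_gt (hSpos q))]
        calc (1:ℝ) = w q i := hwi.symm
          _ ≤ _ := Finset.le_sup' _ (Finset.mem_univ i)
    have hinfw0 : Finset.univ.inf' Finset.univ_nonempty w0 = 0 := by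
      have h1 := tendsto_inf' hconv
      have h2 : Tendsto (fun q => Finset.univ.inf' Finset.univ_nonempty (w (φ q)))
          atTop (𝓝 0) := by
        simp only [hinfq]; exact tendsto_const_nhds
      exact tendsto_nhds_unique h1 h2
    have hsupw0 : Finset.univ.sup' Finset.univ_nonempty w0 = 1 := by
      have h1 := tendsto_sup' hconv
      have h2 : Tendsto (fun q => Finset.univ.sup' Finset.univ_nonempty (w (φ q)))
          atTop (𝓝 1) := by
        simp only [hsupq]; exact tendsto_const_nhds
      exact tendsto_nhds_unique h1 h2
    obtain ⟨i0, _, hi0⟩ := Finset.exists_mem_eq_inf' (Finset.univ_nonempty (α := Fin n)) w0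
    obtain ⟨i1, _, hi1⟩ := Finset.exists_mem_eq_sup' (Finset.univ_nonempty (α := Fin n)) w0
    have hmin0 : ∀ j, w0 i0 ≤ w0 j := fun j => by
      rw [← hi0]; exact Finset.inf'_le _ (Finset.mem_univ j)
    have hmax1 : ∀ j, w0 j ≤ w0 i1 := fun j => by
      rw [← hi1]; exact Finset.le_sup' _ (Finset.mem_univ j)
    have hwfix : ∀ i, matVal (fun a b => ∑ j, P i a b j * w0 j) = w0 i := by
      intro i
      have h := hlimeq i
      rw [op] at h
      have hG : (fun (a : A i) (b : B i) => 0 * r i a b + 1 * ∑ j, P i a b j * w0 j)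
          = fun a b => ∑ j, P i a b j * w0 j := by funext a b; ring
      rw [hG] at h
      rw [h, add_zero]
    have hcons := drift_fixed_constant hn A B P hP0 hP1 huni w0 hwfix i0 i1 hmin0 hmax1
    rw [← hi0, ← hi1, hinfw0, hsupw0] at hcons
    norm_num at hcons
  -- bounded case : extract a convergent subsequence
  obtain ⟨K, hbd⟩ := hbdd
  have hK0 : 0 ≤ K := le_trans (hS0 0) (hbd 0)
  have huabs : ∀ k i, |u k i| ≤ K := by
    intro k i
    rw [abs_of_nonneg (hu0 k i)]
    exact le_trans (huS k i) (hbd k)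
  have hmem : ∀ k, u k ∈ Metric.closedBall (0 : Fin n → ℝ) K := by
    intro k
    rw [Metric.mem_closedBall, dist_pi_le_iff hK0]
    intro i
    rw [Real.dist_eq]
    simpa using huabs k i
  obtain ⟨w0, _, φ, hφ, hconv⟩ :=
    tendsto_subseq_of_bounded Metric.isBounded_closedBall hmem
  have hmem2 : ∀ q, c (φ q) ∈ Metric.closedBall (0 : ℝ) R := by
    intro q
    rw [Metric.mem_closedBall, Real.dist_eq]
    simpa using hc_abs (φ q)
  obtain ⟨lam, _, φ2, hφ2, hconv2⟩ :=
    tendsto_subseq_of_bounded Metric.isBounded_closedBall hmem2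
  have hat : Tendsto (fun q => φ (φ2 q)) atTop atTop :=
    hφ.tendsto_atTop.comp hφ2.tendsto_atTop
  have hconv' : Tendsto (fun q => u (φ (φ2 q))) atTop (𝓝 w0) :=
    hconv.comp hφ2.tendsto_atTop
  have hfinal : ∀ i, op r P 1 1 w0 i = w0 i + lam :=
    op_limit hP0 hP1 hR (tendsto_const_nhds) (hβlim.comp hat) hconv' hconv2
      (fun q j => huabs (φ (φ2 q)) j) (fun q i => hueq (φ (φ2 q)) i)
  refine ⟨w0, lam, ?_⟩
  rw [shapley_eq_op]
  funext i
  rw [hfinal i, add_comm]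

end Main

end ErgodicProof


/-- For a unichain finite concurrent stochastic game, the ergodic equation
`T(v) = λe + v` is solvable. -/
theorem ergodic_equation_solvable_of_unichain {n : ℕ} (hn : 0 < n)
    (A B : Fin n → Type)
    [∀ i, Fintype (A i)] [∀ i, Fintype (B i)]
    [∀ i, Nonempty (A i)] [∀ i, Nonempty (B i)]
    (r : ∀ i, A i → B i → ℝ) (P : ∀ i, A i → B i → Fin n → ℝ)
    (hP0 : ∀ i a b j, 0 ≤ P i a b j) (hP1 : ∀ i a b, ∑ j, P i a b j = 1)
    (huni : ∀ (σ : ∀ i, A i) (τ : ∀ i, B i),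
      Unichain (Matrix.of fun i j => P i (σ i) (τ i) j)) :
    ∃ (v : Fin n → ℝ) (lam : ℝ),
      shapleyOperator A B r P v = fun i => lam + v i := by
  exact ErgodicProof.main_thm hn hP0 hP1 huni
end
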